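/- arXiv:1907.11415 — 4 statements merged into one kernel-verified Lean document; each statement's English description precedes it below -/
import Mathlib

section
/- For an r×k rectangular shape λ = (k, k, ..., k) with r rows, the number of highest weight multiset-valued tableaux of shape λ and weight μ equals the number of semistandard Young tableaux of shape (μ_1 − k, μ_2 − k, ..., μ_r − k) with entries at most k. -/
/-! Signature rule on words: `+` for letter `i`, `-` for letter `i+1`,
cancel ordered pairs `-+`, leaving `+^p -^m`. -/

/-- Scanning left to right, returns (number of uncanceled `+`, number of uncanceled `-`). -/
def sigFold (i : ℕ) (w : List ℕ) : ℕ × ℕ :=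
  w.foldl (fun pm a =>
    if a = i then (if 0 < pm.2 then (pm.1, pm.2 - 1) else (pm.1 + 1, pm.2))
    else if a = i + 1 then (pm.1, pm.2 + 1) else pm) (0, 0)

/-- Position of the rightmost uncanceled `+` (a letter `i`). -/
def fPos (i : ℕ) (w : List ℕ) : Option ℕ :=
  ((List.range w.length).filter
    (fun j => decide (w[j]? = some i ∧ (sigFold i (w.take j)).2 = 0))).getLast?

/-- Position of the leftmost uncanceled `-` (a letter `i+1`). -/
def ePos (i : ℕ) (w : List ℕ) : Option ℕ :=
  ((List.range w.length).filter
    (fun j => decide (w[j]? = some (i + 1) ∧ (sigFold i (w.drop (j + 1))).1 = 0))).head?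

/-- The crystal operator `f_i` on words: change the `i` at the rightmost uncanceled `+`
into an `i+1`. -/
def fWord (i : ℕ) (w : List ℕ) : Option (List ℕ) :=
  (fPos i w).map (fun j => w.set j (i + 1))

/-- The crystal operator `e_i` on words: change the `i+1` at the leftmost uncanceled `-`
into an `i`. -/
def eWord (i : ℕ) (w : List ℕ) : Option (List ℕ) :=
  (ePos i w).map (fun j => w.set j i)

/-! Multiset-valued tableaux. -/

/-- `sh` is a partition: weakly decreasing list of positive integers. -/
def IsPartition (sh : List ℕ) : Prop :=
  sh.Pairwise (· ≥ ·) ∧ ∀ x ∈ sh, 0 < x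

/-- The box in row `r`, column `c` (both 0-indexed) belongs to the Young diagram of `sh`. -/
abbrev InShape (sh : List ℕ) (r c : ℕ) : Prop := c < sh.getD r 0

/-- A (semistandard) multiset-valued tableau of shape `sh` with entries in `{1, …, n}`:
every box of the shape is filled with a finite nonempty multiset, rows weakly increase
(max of a box ≤ min of the box to its right) and columns strictly increase. -/
def IsMVT (n : ℕ) (sh : List ℕ) (T : ℕ → ℕ → Multiset ℕ) : Prop :=
  (∀ r c, InShape sh r c → T r c ≠ 0) ∧
  (∀ r c, ¬ InShape sh r c → T r c = 0) ∧
  (∀ r c, ∀ x ∈ T r c, 1 ≤ x ∧ x ≤ n) ∧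
  (∀ r c, InShape sh r (c + 1) → ∀ x ∈ T r c, ∀ y ∈ T r (c + 1), x ≤ y) ∧
  (∀ r c, InShape sh (r + 1) c → ∀ x ∈ T r c, ∀ y ∈ T (r + 1) c, x < y)

/-- Number of boxes in column `c` of the shape `sh`. -/
def colHeight (sh : List ℕ) (c : ℕ) : ℕ := (sh.filter (fun p => decide (c < p))).length

/-- Sort a multiset increasingly into a list. -/
def msort (M : Multiset ℕ) : List ℕ := M.sort (· ≤ ·)

/-- Column reading word: the smallest entry of each box from bottom to top, then the
remaining entries of each box, smallest to largest, boxes top to bottom. -/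
def colWord (sh : List ℕ) (T : ℕ → ℕ → Multiset ℕ) (c : ℕ) : List ℕ :=
  ((List.range (colHeight sh c)).reverse.map (fun r => (msort (T r c)).take 1)).flatten
    ++ ((List.range (colHeight sh c)).map (fun r => (msort (T r c)).drop 1)).flatten

/-- The boxes corresponding to the letters of `colWord`, in order. -/
def colBoxes (sh : List ℕ) (T : ℕ → ℕ → Multiset ℕ) (c : ℕ) : List (ℕ × ℕ) :=
  ((List.range (colHeight sh c)).reverse.map
      (fun r => ((msort (T r c)).take 1).map (fun _ => (r, c)))).flatten
    ++ ((List.range (colHeight sh c)).map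
      (fun r => ((msort (T r c)).drop 1).map (fun _ => (r, c)))).flatten

/-- The reading word of a multiset-valued tableau: column reading words, columns left to right. -/
def mvtWord (sh : List ℕ) (T : ℕ → ℕ → Multiset ℕ) : List ℕ :=
  ((List.range (sh.headD 0)).map (colWord sh T)).flatten

/-- The boxes corresponding to the letters of `mvtWord`, in order. -/
def mvtBoxes (sh : List ℕ) (T : ℕ → ℕ → Multiset ℕ) : List (ℕ × ℕ) :=
  ((List.range (sh.headD 0)).map (colBoxes sh T)).flatten

/-- The crystal operator `f_i` on multiset-valued tableaux: act on the box `b` of the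
rightmost uncanceled `+`; if the box below `b` contains an `i+1`, move the `i` from `b`
to an `i+1` in that box, otherwise replace the `i` in `b` by an `i+1`. -/
def mvtF (sh : List ℕ) (i : ℕ) (T : ℕ → ℕ → Multiset ℕ) :
    Option (ℕ → ℕ → Multiset ℕ) :=
  (fPos i (mvtWord sh T)).map (fun j =>
    let rc := (mvtBoxes sh T).getD j (0, 0)
    let r := rc.1
    let c := rc.2
    if (i + 1) ∈ T (r + 1) c then
      fun r' c' =>
        if r' = r ∧ c' = c then T r c - {i}
        else if r' = r + 1 ∧ c' = c then T (r + 1) c + {i + 1}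
        else T r' c'
    else
      fun r' c' => if r' = r ∧ c' = c then (T r c - {i}) + {i + 1} else T r' c')

/-- The crystal operator `e_i` on multiset-valued tableaux: act on the box `b` of the
leftmost uncanceled `-`; if the box above `b` contains an `i`, move the `i+1` from `b`
to an `i` in that box, otherwise replace the `i+1` in `b` by an `i`. -/
def mvtE (sh : List ℕ) (i : ℕ) (T : ℕ → ℕ → Multiset ℕ) :
    Option (ℕ → ℕ → Multiset ℕ) :=
  (ePos i (mvtWord sh T)).map (fun j =>
    let rc := (mvtBoxes sh T).getD j (0, 0)
    let r := rc.1
    let c := rc.2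
    if 0 < r ∧ i ∈ T (r - 1) c then
      fun r' c' =>
        if r' = r ∧ c' = c then T r c - {i + 1}
        else if r' = r - 1 ∧ c' = c then T (r - 1) c + {i}
        else T r' c'
    else
      fun r' c' => if r' = r ∧ c' = c then (T r c - {i + 1}) + {i} else T r' c')

/-- A multiset-valued tableau is highest weight if it is killed by all raising operators. -/
def MvtHW (sh : List ℕ) (T : ℕ → ℕ → Multiset ℕ) : Prop :=
  ∀ i, 1 ≤ i → mvtE sh i T = none

/-! Skew semistandard Young tableaux. -/

/-- The box `(r, c)` lies in the skew shape `μ/λ`. -/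
abbrev InSkew (mu lam : List ℕ) (r c : ℕ) : Prop :=
  lam.getD r 0 ≤ c ∧ c < mu.getD r 0

/-- A semistandard Young tableau of skew shape `μ/λ`: positive entries, rows weakly
increasing, columns strictly increasing, zero outside the shape. -/
def IsSkewSSYT (mu lam : List ℕ) (S : ℕ → ℕ → ℕ) : Prop :=
  (∀ r c, ¬ InSkew mu lam r c → S r c = 0) ∧
  (∀ r c, InSkew mu lam r c → 1 ≤ S r c) ∧
  (∀ r c, InSkew mu lam r c → InSkew mu lam r (c + 1) → S r c ≤ S r (c + 1)) ∧
  (∀ r c, InSkew mu lam r c → InSkew mu lam (r + 1) c → S r c < S (r + 1) c)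
/-! ### Section A: sigFold algebra -/

def sigStep (i : ℕ) : ℕ × ℕ → ℕ → ℕ × ℕ := fun pm a =>
  if a = i then (if 0 < pm.2 then (pm.1, pm.2 - 1) else (pm.1 + 1, pm.2))
  else if a = i + 1 then (pm.1, pm.2 + 1) else pm

lemma sigFold_eq_foldl (i : ℕ) (w : List ℕ) : sigFold i w = w.foldl (sigStep i) (0, 0) := rfl

def sigComb (s t : ℕ × ℕ) : ℕ × ℕ := (s.1 + (t.1 - s.2), t.2 + (s.2 - t.1))

lemma sigComb_zero (t : ℕ × ℕ) : sigComb (0, 0) t = t := by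
  simp [sigComb]

lemma foldl_sigStep (i : ℕ) (w : List ℕ) :
    ∀ s : ℕ × ℕ, w.foldl (sigStep i) s = sigComb s (sigFold i w) := by
  induction w with
  | nil => intro s; simp [sigFold, sigComb]
  | cons a w ih =>
    intro s
    have h1 : (a :: w).foldl (sigStep i) s = w.foldl (sigStep i) (sigStep i s a) := rfl
    have h2 : sigFold i (a :: w) = w.foldl (sigStep i) (sigStep i (0, 0) a) := rfl
    rw [h1, h2, ih (sigStep i s a), ih (sigStep i (0,0) a)]
    rcases sigFold i w with ⟨P, M⟩
    rcases s with ⟨p, m⟩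
    by_cases hai : a = i
    · subst hai
      by_cases hm : 0 < m
      · simp [sigStep, sigComb, hm]
        constructor <;> omega
      · simp [sigStep, sigComb, hm]
        constructor <;> omega
    · by_cases hai1 : a = i + 1
      · simp [sigStep, sigComb, hai, hai1]
        constructor <;> omega
      · simp [sigStep, sigComb, hai, hai1]

lemma sigFold_append (i : ℕ) (u v : List ℕ) :
    sigFold i (u ++ v) = sigComb (sigFold i u) (sigFold i v) := by
  rw [sigFold_eq_foldl, List.foldl_append, ← sigFold_eq_foldl, foldl_sigStep]

lemma sigFold_nil (i : ℕ) : sigFold i [] = (0, 0) := rfl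

lemma sigFold_of_forall (i : ℕ) (w : List ℕ) (h : ∀ a ∈ w, a ≠ i ∧ a ≠ i + 1) :
    sigFold i w = (0, 0) := by
  induction w with
  | nil => rfl
  | cons a w ih =>
    have ha := h a (by simp)
    have : sigFold i (a :: w) = sigFold i ([a] ++ w) := rfl
    rw [this, sigFold_append, ih (fun b hb => h b (by simp [hb]))]
    simp [sigFold, sigStep, ha.1, ha.2, sigComb]

lemma sigFold_single_i (i : ℕ) : sigFold i [i] = (1, 0) := by simp [sigFold, sigStep]

lemma sigFold_single_succ (i : ℕ) : sigFold i [i + 1] = (0, 1) := by simp [sigFold, sigStep]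

lemma sigFold_replicate_i (i q : ℕ) : sigFold i (List.replicate q i) = (q, 0) := by
  induction q with
  | zero => rfl
  | succ q ih =>
    rw [List.replicate_succ', sigFold_append, ih, sigFold_single_i]
    simp [sigComb]

lemma sigFold_replicate_succ (i q : ℕ) : sigFold i (List.replicate q (i + 1)) = (0, q) := by
  induction q with
  | zero => rfl
  | succ q ih =>
    rw [List.replicate_succ', sigFold_append, ih, sigFold_single_succ]
    simp [sigComb]; omega
/-! ### Section B: ePos = none characterization -/

lemma ePos_eq_none_iff (i : ℕ) (w : List ℕ) :
    ePos i w = none ↔ ∀ u v : List ℕ, w = u ++ (i + 1) :: v → (sigFold i v).1 ≠ 0 := by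
  unfold ePos
  rw [List.head?_eq_none_iff, List.filter_eq_nil_iff]
  constructor
  · intro h u v huv
    intro hsig
    have hj : u.length ∈ List.range w.length := by
      simp [huv]
    have hh := h _ hj
    simp only [decide_eq_true_eq, not_and] at hh
    apply hh
    · rw [huv, List.getElem?_append_right (le_refl _)]
      simp
    · have : w.drop (u.length + 1) = v := by
        rw [huv]
        have : u ++ (i+1) :: v = (u ++ [i+1]) ++ v := by simp
        rw [this]
        have hl : (u ++ [i+1]).length = u.length + 1 := by simp
        rw [← hl, List.drop_left]
      rw [this, hsig]
  · intro h j hj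
    simp only [List.mem_range] at hj
    simp only [decide_eq_true_eq, not_and]
    intro hget hsig
    have hw : w = w.take j ++ (i+1) :: w.drop (j+1) := by
      have h1 : w.drop j = w[j] :: w.drop (j+1) := List.drop_eq_getElem_cons hj
      have h2 : w[j] = i + 1 := by
        have := List.getElem?_eq_getElem hj
        rw [hget] at this
        exact Option.some_inj.mp this.symm
      conv_lhs => rw [← List.take_append_drop j w]
      rw [h1, h2]
    exact h _ _ hw hsig
/-! ### Section C: structured tableaux and their words -/

def descL : ℕ → List ℕ
  | 0 => []
  | n+1 => (n+1) :: descL n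

def toT (r k : ℕ) (m : ℕ → ℕ → ℕ) : ℕ → ℕ → Multiset ℕ :=
  fun a c => if a < r ∧ c < k then Multiset.replicate (m a c) (a + 1) else 0

def extrasCol (m : ℕ → ℕ → ℕ) (r c : ℕ) : List ℕ :=
  ((List.range r).map (fun a => List.replicate (m a c - 1) (a + 1))).flatten

def blockW (m : ℕ → ℕ → ℕ) (r c : ℕ) : List ℕ := descL r ++ extrasCol m r c

def tailW (m : ℕ → ℕ → ℕ) (r k : ℕ) : ℕ → List ℕ := fun c =>
  if c < k then blockW m r c ++ tailW m r k (c+1) else []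
termination_by c => k - c
decreasing_by omega

def tl (m : ℕ → ℕ → ℕ) (k a c : ℕ) : ℕ := ∑ d ∈ Finset.Ico c k, (m a d - 1)

lemma tailW_lt {m r k c} (h : c < k) : tailW m r k c = blockW m r c ++ tailW m r k (c+1) := by
  rw [tailW]; simp [h]

lemma tailW_ge {m r k c} (h : ¬ c < k) : tailW m r k c = [] := by
  rw [tailW]; simp [h]

lemma mem_descL {x n : ℕ} : x ∈ descL n ↔ 1 ≤ x ∧ x ≤ n := by
  induction n with
  | zero => simp [descL]; omega
  | succ n ih => simp [descL, ih]; omega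

lemma descL_eq_range_map (n : ℕ) : (List.range n).reverse.map (· + 1) = descL n := by
  induction n with
  | zero => rfl
  | succ n ih => rw [List.range_succ]; simp [descL, ← ih]

lemma descL_split {n j : ℕ} (h : j ≤ n) :
    ∃ u, descL n = u ++ descL j ∧ ∀ x ∈ u, j < x := by
  induction n with
  | zero =>
    exact ⟨[], by simp [Nat.le_zero.mp h]⟩
  | succ n ih =>
    rcases Nat.eq_or_lt_of_le h with h' | h'
    · exact ⟨[], by simp [h']⟩
    · obtain ⟨u, hu, hux⟩ := ih (by omega)
      exact ⟨(n+1) :: u, by simp [descL, hu], by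
        intro x hx
        rcases List.mem_cons.mp hx with h | h
        · omega
        · exact hux x h⟩

lemma descL_decomp {n x : ℕ} {u v : List ℕ} (h : descL n = u ++ x :: v) :
    1 ≤ x ∧ x ≤ n ∧ v = descL (x - 1) := by
  induction n generalizing u with
  | zero => simp [descL] at h
  | succ n ih =>
    rw [descL] at h
    cases u with
    | nil =>
      simp at h
      refine ⟨by omega, by omega, ?_⟩
      rw [← h.2, h.1.symm]
      simp
    | cons y u' =>
      simp at h
      have := ih h.2
      exact ⟨this.1, by omega, this.2.2.symm ▸ rfl⟩

lemma msort_replicate (q v : ℕ) : msort (Multiset.replicate q v) = List.replicate q v := by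
  unfold msort
  refine (fun hp hs => List.Perm.eq_of_pairwise' (Multiset.pairwise_sort ..) hs hp) ?_ ?_
  · rw [← Multiset.coe_eq_coe, Multiset.sort_eq, Multiset.coe_replicate]
  · exact List.pairwise_replicate.mpr (by simp)

lemma getD_replicate' (r k a : ℕ) : (List.replicate r k).getD a 0 = if a < r then k else 0 := by
  split
  · rw [List.getD_eq_getElem _ _ (by simpa using ‹a < r›)]
    simp
  · rw [List.getD_eq_default _ _ (by simpa using Nat.le_of_not_lt ‹¬ a < r›)]

lemma inShape_replicate {r k a c : ℕ} : InShape (List.replicate r k) a c ↔ a < r ∧ c < k := by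
  unfold InShape
  rw [getD_replicate']
  split
  · simp_all
  · simp_all

lemma colHeight_replicate {r k c : ℕ} (hc : c < k) : colHeight (List.replicate r k) c = r := by
  unfold colHeight
  rw [List.filter_eq_self.mpr]
  · simp
  · intro a ha
    rw [List.eq_of_mem_replicate ha]
    simpa using hc

lemma flatten_map_singleton {α β : Type*} (f : α → β) (l : List α) :
    (l.map (fun a => [f a])).flatten = l.map f := by
  induction l with
  | nil => rfl
  | cons a l ih => simp [ih]

lemma msort_toT {r k a c : ℕ} {m : ℕ → ℕ → ℕ} (ha : a < r) (hc : c < k) :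
    msort (toT r k m a c) = List.replicate (m a c) (a + 1) := by
  rw [toT]
  simp [ha, hc, msort_replicate]

lemma colWord_toT {r k c : ℕ} {m : ℕ → ℕ → ℕ} (hm : ∀ a < r, ∀ c < k, 1 ≤ m a c)
    (hc : c < k) :
    colWord (List.replicate r k) (toT r k m) c = blockW m r c := by
  unfold colWord blockW
  rw [colHeight_replicate hc]
  congr 1
  · have heq : (List.range r).reverse.map (fun a => (msort (toT r k m a c)).take 1)
        = (List.range r).reverse.map (fun a => [a + 1]) := by
      apply List.map_congr_left
      intro a ha
      rw [List.mem_reverse, List.mem_range] at ha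
      rw [msort_toT ha hc, List.take_replicate]
      have h1 : min 1 (m a c) = 1 := by have := hm a ha c hc; omega
      rw [h1]
      rfl
    rw [heq, flatten_map_singleton, descL_eq_range_map]
  · unfold extrasCol
    congr 1
    apply List.map_congr_left
    intro a ha
    rw [List.mem_range] at ha
    rw [msort_toT ha hc, List.drop_replicate]

lemma headD_replicate {r k : ℕ} (hr : 0 < r) : (List.replicate r k).headD 0 = k := by
  cases r with
  | zero => omega
  | succ n => rfl

lemma range'_map_flatten {m : ℕ → ℕ → ℕ} {r k : ℕ} :
    ∀ j c, c + j = k →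
      ((List.range' c j).map (blockW m r)).flatten = tailW m r k c := by
  intro j
  induction j with
  | zero => intro c hc; rw [tailW_ge (by omega)]; rfl
  | succ j ih =>
    intro c hc
    rw [List.range'_succ]
    simp only [List.map_cons, List.flatten_cons]
    rw [ih (c+1) (by omega), ← tailW_lt (by omega)]

lemma mvtWord_toT {r k : ℕ} {m : ℕ → ℕ → ℕ} (hr : 0 < r)
    (hm : ∀ a < r, ∀ c < k, 1 ≤ m a c) :
    mvtWord (List.replicate r k) (toT r k m) = tailW m r k 0 := by
  unfold mvtWord
  rw [headD_replicate hr, ← range'_map_flatten k 0 (by omega), List.range_eq_range']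
  congr 1
  apply List.map_congr_left
  intro c hc
  rw [List.mem_range'] at hc
  exact colWord_toT hm (by omega)
/-! ### Section D: sigFold on structured words, decompositions -/

lemma flatten_decomp {α : Type*} : ∀ {L : List (List α)} {u v : List α} {x : α},
    L.flatten = u ++ x :: v →
    ∃ L1 w1 w2 L2, L = L1 ++ (w1 ++ x :: w2) :: L2 ∧ v = w2 ++ L2.flatten := by
  intro L
  induction L with
  | nil => intro u v x h; simp at h
  | cons h t ih =>
    intro u v x heq
    rw [List.flatten_cons] at heq
    rcases List.append_eq_append_iff.mp heq.symm with ⟨a', ha1, ha2⟩ | ⟨c', hc1, hc2⟩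
    · cases a' with
      | nil =>
        simp at ha2
        obtain ⟨L1, w1, w2, L2, hL, hv⟩ := ih (u := []) (by simpa using ha2.symm)
        exact ⟨h :: L1, w1, w2, L2, by rw [hL]; rfl, hv⟩
      | cons y a'' =>
        simp at ha2
        obtain ⟨hy, hv⟩ := ha2
        exact ⟨[], u, a'', t, by rw [ha1, hy]; simp, by rw [hv]⟩
    · obtain ⟨L1, w1, w2, L2, hL, hv⟩ := ih hc2
      exact ⟨h :: L1, w1, w2, L2, by rw [hL]; rfl, hv⟩

lemma map_decomp {α β : Type*} : ∀ {l : List α} {f : α → β} {L1 L2 : List β} {w : β},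
    l.map f = L1 ++ w :: L2 → ∃ l1 a l2, l = l1 ++ a :: l2 ∧ w = f a ∧ L2 = l2.map f := by
  intro l
  induction l with
  | nil => intro f L1 L2 w h; simp at h
  | cons b t ih =>
    intro f L1 L2 w h
    cases L1 with
    | nil =>
      simp at h
      exact ⟨[], b, t, rfl, h.1.symm, h.2.symm⟩
    | cons y L1' =>
      simp at h
      obtain ⟨l1, a, l2, h1, h2, h3⟩ := ih h.2
      exact ⟨b :: l1, a, l2, by rw [h1]; rfl, h2, h3⟩

lemma range_decomp_gt {n a : ℕ} {l1 l2 : List ℕ} (h : List.range n = l1 ++ a :: l2) :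
    ∀ x ∈ l2, a < x := by
  have hp : (List.range n).Pairwise (· < ·) := List.pairwise_lt_range (n := n)
  rw [h] at hp
  have := (List.pairwise_append.mp hp).2.1
  exact (List.pairwise_cons.mp this).1

/-- Split of the extras word of a column around rows `i-1` and `i`. -/
lemma extrasCol_split {m : ℕ → ℕ → ℕ} {r c i : ℕ} (h1 : 1 ≤ i) (h2 : i < r) :
    ∃ W1 W2, extrasCol m r c
        = W1 ++ (List.replicate (m (i-1) c - 1) i ++ (List.replicate (m i c - 1) (i+1) ++ W2))
      ∧ (∀ x ∈ W1, x < i) ∧ (∀ x ∈ W2, i + 1 < x) := by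
  obtain ⟨j, rfl⟩ : ∃ j, i = j + 1 := ⟨i - 1, by omega⟩
  have hr2 : r = (j+2) + (r - (j+2)) := by omega
  have hr : List.range r
      = ((List.range j ++ [j]) ++ [j+1]) ++ (List.range (r - (j+2))).map ((j+2) + ·) := by
    conv_lhs => rw [hr2]
    rw [List.range_add, ← List.range_succ, ← List.range_succ]
  refine ⟨((List.range j).map (fun a => List.replicate (m a c - 1) (a+1))).flatten,
    (((List.range (r - (j+2))).map ((j+2) + ·)).map
      (fun a => List.replicate (m a c - 1) (a+1))).flatten,
    ?_, ?_, ?_⟩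
  · unfold extrasCol
    rw [hr]
    simp only [List.map_append, List.flatten_append, List.map_cons, List.map_nil,
      List.flatten_cons, List.flatten_nil, List.append_nil, List.append_assoc]
    congr 2
  · intro x hx
    simp only [List.mem_flatten, List.mem_map] at hx
    obtain ⟨w, ⟨a, ha, rfl⟩, hxw⟩ := hx
    rw [List.mem_range] at ha
    have := List.eq_of_mem_replicate hxw
    omega
  · intro x hx
    simp only [List.mem_flatten, List.mem_map] at hx
    obtain ⟨w, ⟨a, ha, rfl⟩, hxw⟩ := hx
    simp only [List.mem_map, List.mem_range] at ha
    obtain ⟨b, hb, rfl⟩ := ha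
    have := List.eq_of_mem_replicate hxw
    omega

lemma sigFold_of_lt {i : ℕ} {w : List ℕ} (h : ∀ x ∈ w, x < i) : sigFold i w = (0, 0) :=
  sigFold_of_forall i w (fun a ha => by have := h a ha; omega)

lemma sigFold_of_gt {i : ℕ} {w : List ℕ} (h : ∀ x ∈ w, i + 1 < x) : sigFold i w = (0, 0) :=
  sigFold_of_forall i w (fun a ha => by have := h a ha; omega)

lemma sigFold_extrasCol {m : ℕ → ℕ → ℕ} {r c i : ℕ} (h1 : 1 ≤ i) (h2 : i < r) :
    sigFold i (extrasCol m r c) = (m (i-1) c - 1, m i c - 1) := by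
  obtain ⟨W1, W2, heq, hW1, hW2⟩ := extrasCol_split (m := m) (c := c) h1 h2
  rw [heq, sigFold_append, sigFold_append, sigFold_append,
    sigFold_of_lt hW1, sigFold_of_gt hW2, sigFold_replicate_i, sigFold_replicate_succ]
  simp [sigComb]

lemma sigFold_descL_self {i : ℕ} (h1 : 1 ≤ i) : sigFold i (descL i) = (1, 0) := by
  obtain ⟨j, rfl⟩ : ∃ j, i = j + 1 := ⟨i - 1, by omega⟩
  have : descL (j+1) = [j+1] ++ descL j := rfl
  rw [this, sigFold_append, sigFold_single_i,
    sigFold_of_lt (fun x hx => by have := mem_descL.mp hx; omega)]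
  simp [sigComb]

lemma sigFold_descL {r i : ℕ} (h1 : 1 ≤ i) (h2 : i < r) : sigFold i (descL r) = (0, 0) := by
  obtain ⟨u, hu, hux⟩ := descL_split (n := r) (j := i + 1) (by omega)
  have : descL (i+1) = [i+1] ++ descL i := rfl
  rw [hu, this, sigFold_append, sigFold_append, sigFold_single_succ, sigFold_descL_self h1,
    sigFold_of_gt hux]
  simp [sigComb]

lemma sigFold_blockW {m : ℕ → ℕ → ℕ} {r c i : ℕ} (h1 : 1 ≤ i) (h2 : i < r) :
    sigFold i (blockW m r c) = (m (i-1) c - 1, m i c - 1) := by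
  rw [blockW, sigFold_append, sigFold_descL h1 h2, sigFold_extrasCol h1 h2, sigComb_zero]

lemma mem_blockW {m : ℕ → ℕ → ℕ} {r c x : ℕ} (h : x ∈ blockW m r c) : 1 ≤ x ∧ x ≤ r := by
  rw [blockW, List.mem_append] at h
  rcases h with h | h
  · exact mem_descL.mp h
  · rw [extrasCol, List.mem_flatten] at h
    obtain ⟨w, hw, hxw⟩ := h
    rw [List.mem_map] at hw
    obtain ⟨a, ha, rfl⟩ := hw
    rw [List.mem_range] at ha
    have := List.eq_of_mem_replicate hxw
    omega

lemma mem_tailW {m : ℕ → ℕ → ℕ} {r k : ℕ} : ∀ {c x : ℕ}, x ∈ tailW m r k c → 1 ≤ x ∧ x ≤ r := by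
  suffices h : ∀ n c x, k - c ≤ n → x ∈ tailW m r k c → 1 ≤ x ∧ x ≤ r by
    intro c x hx; exact h (k - c) c x le_rfl hx
  intro n
  induction n with
  | zero =>
    intro c x hc hx
    rw [tailW_ge (by omega)] at hx
    simp at hx
  | succ n ih =>
    intro c x hc hx
    by_cases h : c < k
    · rw [tailW_lt h, List.mem_append] at hx
      rcases hx with h' | h'
      · exact mem_blockW h'
      · exact ih (c+1) x (by omega) h'
    · rw [tailW_ge h] at hx; simp at hx
/-! ### Section E: highest weight characterization -/

section HWsec
variable {m : ℕ → ℕ → ℕ} {r k i : ℕ}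

lemma tl_succ {a c : ℕ} (hc : c < k) : tl m k a c = (m a c - 1) + tl m k a (c+1) := by
  unfold tl
  rw [Finset.sum_eq_sum_Ico_succ_bot hc]

lemma tl_ge {a c : ℕ} (hc : ¬ c < k) : tl m k a c = 0 := by
  unfold tl
  rw [Finset.Ico_eq_empty (by omega)]
  rfl

lemma G_add_tl (h1 : 1 ≤ i) (h2 : i < r)
    (hB : ∀ c < k, m i c - 1 ≤ (sigFold i (tailW m r k (c+1))).1) :
    ∀ c, (sigFold i (tailW m r k c)).1 + tl m k i c = tl m k (i-1) c := by
  suffices h : ∀ n c, k - c ≤ n →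
      (sigFold i (tailW m r k c)).1 + tl m k i c = tl m k (i-1) c by
    intro c; exact h (k-c) c le_rfl
  intro n
  induction n with
  | zero =>
    intro c hc
    rw [tailW_ge (by omega), tl_ge (by omega), tl_ge (by omega)]
    rfl
  | succ n ih =>
    intro c hc
    by_cases h : c < k
    · have hrec := ih (c+1) (by omega)
      have hBc := hB c h
      rw [tailW_lt h, sigFold_append, sigFold_blockW h1 h2, tl_succ h, tl_succ (a := i-1) h]
      simp only [sigComb]
      omega
    · rw [tailW_ge h, tl_ge h, tl_ge h]
      rfl

lemma tl_le_G (h1 : 1 ≤ i) (h2 : i < r)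
    (hineq : ∀ c < k, tl m k i c ≤ tl m k (i-1) (c+1)) :
    ∀ c, tl m k (i-1) c ≤ (sigFold i (tailW m r k c)).1 + tl m k i c := by
  suffices h : ∀ n c, k - c ≤ n →
      tl m k (i-1) c ≤ (sigFold i (tailW m r k c)).1 + tl m k i c by
    intro c; exact h (k-c) c le_rfl
  intro n
  induction n with
  | zero =>
    intro c hc
    rw [tl_ge (by omega), tl_ge (by omega)]
    omega
  | succ n ih =>
    intro c hc
    by_cases h : c < k
    · have hrec := ih (c+1) (by omega)
      have hi1 := hineq c h
      have hs1 := tl_succ (m := m) (a := i) h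
      have hs2 := tl_succ (m := m) (a := i-1) h
      rw [tailW_lt h, sigFold_append, sigFold_blockW h1 h2]
      simp only [sigComb]
      omega
    · rw [tl_ge h, tl_ge h]
      omega

lemma hB_of_ineq (h1 : 1 ≤ i) (h2 : i < r)
    (hineq : ∀ c < k, tl m k i c ≤ tl m k (i-1) (c+1)) :
    ∀ c < k, m i c - 1 ≤ (sigFold i (tailW m r k (c+1))).1 := by
  intro c hc
  have h := tl_le_G h1 h2 hineq (c+1)
  have h2' := hineq c hc
  have h3 := tl_succ (m := m) (a := i) hc
  omega

lemma tailW_prefix : ∀ c, ∃ p, tailW m r k 0 = p ++ tailW m r k c := by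
  intro c
  induction c with
  | zero => exact ⟨[], rfl⟩
  | succ c ih =>
    obtain ⟨p, hp⟩ := ih
    by_cases h : c < k
    · exact ⟨p ++ blockW m r c, by rw [hp, tailW_lt h, List.append_assoc]⟩
    · exact ⟨p, by rw [hp, tailW_ge h, tailW_ge (by omega)]⟩

lemma tailW_decomp_ne (h1 : 1 ≤ i) (h2 : i < r)
    (hB : ∀ c < k, m i c - 1 ≤ (sigFold i (tailW m r k (c+1))).1) :
    ∀ c u v, tailW m r k c = u ++ (i+1) :: v → (sigFold i v).1 ≠ 0 := by
  suffices h : ∀ n c, k - c ≤ n → ∀ u v,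
      tailW m r k c = u ++ (i+1) :: v → (sigFold i v).1 ≠ 0 by
    intro c; exact h (k-c) c le_rfl
  intro n
  induction n with
  | zero =>
    intro c hc u v heq
    rw [tailW_ge (by omega)] at heq
    simp at heq
  | succ n ih =>
    intro c hc u v heq
    by_cases h : c < k
    · rw [tailW_lt h, blockW, List.append_assoc] at heq
      -- first, a sublemma for decompositions of the extras ++ tail part
      have hrest : ∀ u2 v2, extrasCol m r c ++ tailW m r k (c+1) = u2 ++ (i+1) :: v2 →
          (sigFold i v2).1 ≠ 0 := by
        intro u2 v2 h2'
        rcases List.append_eq_append_iff.mp h2'.symm with ⟨a', ha1, ha2⟩ | ⟨c', hc1, hc2⟩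
        · cases a' with
          | nil =>
            simp at ha2
            exact ih (c+1) (by omega) [] v2 (by simpa using ha2.symm)
          | cons y a'' =>
            simp at ha2
            obtain ⟨hy, hv⟩ := ha2
            -- the i+1 is inside the extras word
            obtain ⟨L1, w1, w2, L2, hL, hv3⟩ := flatten_decomp
              (L := (List.range r).map (fun a => List.replicate (m a c - 1) (a + 1)))
              (u := u2) (v := a'') (x := i + 1)
              (by show extrasCol m r c = _; rw [ha1, ← hy])
            obtain ⟨l1, a, l2, hl, hfa, hL2⟩ := map_decomp hL
            have hai : a = i := by
              have hmem : (i+1) ∈ List.replicate (m a c - 1) (a+1) := by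
                rw [← hfa]
                simp
              have := List.eq_of_mem_replicate hmem
              omega
            rw [hai] at hfa hl
            have hw2 : w2 = List.replicate w2.length (i+1) := by
              apply List.eq_replicate_of_mem
              intro b hb
              have hmem : b ∈ List.replicate (m i c - 1) (i+1) := by
                rw [← hfa]
                simp [hb]
              exact List.eq_of_mem_replicate hmem
            have hlen : w1.length + 1 + w2.length = m i c - 1 := by
              have := congrArg List.length hfa
              simp at this
              omega
            have hhigh : ∀ x ∈ L2.flatten, i + 1 < x := by
              intro x hx
              simp only [List.mem_flatten] at hx
              obtain ⟨w, hw, hxw⟩ := hx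
              rw [hL2, List.mem_map] at hw
              obtain ⟨b, hb, rfl⟩ := hw
              have hgt := range_decomp_gt hl b hb
              have := List.eq_of_mem_replicate hxw
              omega
            have hv2 : v2 = List.replicate w2.length (i+1) ++ (L2.flatten ++ tailW m r k (c+1)) := by
              rw [hv, hv3, ← hw2, List.append_assoc]
            rw [hv2, sigFold_append, sigFold_append, sigFold_replicate_succ,
              sigFold_of_gt hhigh, sigComb_zero]
            have hBc := hB c h
            simp only [sigComb]
            omega
        · exact ih (c+1) (by omega) c' v2 hc2
      rcases List.append_eq_append_iff.mp heq.symm with ⟨a', ha1, ha2⟩ | ⟨c', hc1, hc2⟩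
      · cases a' with
        | nil =>
          simp at ha2
          exact hrest [] v (by simpa using ha2.symm)
        | cons y a'' =>
          simp at ha2
          obtain ⟨hy, hv⟩ := ha2
          have hdd := descL_decomp (x := y) ha1
          have hyi : y = i + 1 := hy.symm
          rw [hyi] at hdd
          have ha'' : a'' = descL i := by simpa using hdd.2.2
          rw [hv, ha'', sigFold_append, sigFold_descL_self h1]
          simp [sigComb]
      · exact hrest c' v hc2
    · rw [tailW_ge h] at heq
      simp at heq

lemma hB_of_hw (h1 : 1 ≤ i) (h2 : i < r)
    (hw : ∀ u v, tailW m r k 0 = u ++ (i+1) :: v → (sigFold i v).1 ≠ 0) :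
    ∀ c < k, m i c - 1 ≤ (sigFold i (tailW m r k (c+1))).1 := by
  intro c hc
  by_cases hB0 : m i c - 1 = 0
  · omega
  obtain ⟨p, hp⟩ := tailW_prefix (m := m) (r := r) (k := k) c
  obtain ⟨W1, W2, hsplit, hW1, hW2⟩ := extrasCol_split (m := m) (c := c) h1 h2
  have hrep : List.replicate (m i c - 1) (i+1) = (i+1) :: List.replicate (m i c - 2) (i+1) := by
    have he : m i c - 1 = (m i c - 2) + 1 := by omega
    rw [he, List.replicate_succ]
  have hdec : tailW m r k 0
      = (p ++ (descL r ++ (W1 ++ List.replicate (m (i-1) c - 1) i)))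
        ++ (i+1) :: (List.replicate (m i c - 2) (i+1) ++ (W2 ++ tailW m r k (c+1))) := by
    rw [hp, tailW_lt hc, blockW, hsplit, hrep]
    simp [List.append_assoc]
  have hne := hw _ _ hdec
  rw [sigFold_append, sigFold_append, sigFold_replicate_succ, sigFold_of_gt hW2,
    sigComb_zero] at hne
  simp only [sigComb] at hne
  omega

theorem hw_iff_ineq (h1 : 1 ≤ i) (h2 : i < r) :
    ePos i (tailW m r k 0) = none ↔ ∀ c < k, tl m k i c ≤ tl m k (i-1) (c+1) := by
  rw [ePos_eq_none_iff]
  constructor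
  · intro hw c hc
    have hB := hB_of_hw h1 h2 hw
    have hG := G_add_tl h1 h2 hB (c+1)
    have hBc := hB c hc
    have hs := tl_succ (m := m) (a := i) hc
    omega
  · intro hineq u v heq
    exact tailW_decomp_ne h1 h2 (hB_of_ineq h1 h2 hineq) 0 u v heq

theorem mvtHW_iff (hr : 0 < r) (hm : ∀ a < r, ∀ c < k, 1 ≤ m a c) :
    MvtHW (List.replicate r k) (toT r k m)
      ↔ ∀ i, 1 ≤ i → i < r → ∀ c < k, tl m k i c ≤ tl m k (i-1) (c+1) := by
  unfold MvtHW
  constructor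
  · intro h i hi1 hi2 c hc
    have hh := h i hi1
    rw [mvtE, Option.map_eq_none_iff, mvtWord_toT hr hm] at hh
    exact (hw_iff_ineq hi1 hi2).mp hh c hc
  · intro h i hi
    rw [mvtE, Option.map_eq_none_iff, mvtWord_toT hr hm]
    by_cases hir : i < r
    · exact (hw_iff_ineq hi hir).mpr (h i hi hir)
    · rw [ePos_eq_none_iff]
      intro u v heq
      exfalso
      have hmem : (i+1) ∈ tailW m r k 0 := by rw [heq]; simp
      have := mem_tailW hmem
      omega

end HWsec
/-! ### Section F: counting and weight -/

def Mset (r k : ℕ) (mu : List ℕ) : Set (ℕ → ℕ → ℕ) :=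
  {m | (∀ a c, ¬(a < r ∧ c < k) → m a c = 0) ∧
       (∀ a < r, ∀ c < k, 1 ≤ m a c) ∧
       (∀ a < r, ∑ c ∈ Finset.range k, m a c = mu.getD a 0) ∧
       (∀ i, 1 ≤ i → i < r → ∀ c < k, tl m k i c ≤ tl m k (i-1) (c+1))}

lemma count_flatten' (v : ℕ) : ∀ L : List (List ℕ),
    (L.flatten).count v = (L.map (fun l => l.count v)).sum := by
  intro L
  induction L with
  | nil => rfl
  | cons h t ih => simp [List.count_append, ih]

lemma sum_map_range (f : ℕ → ℕ) : ∀ n, ((List.range n).map f).sum = ∑ c ∈ Finset.range n, f c := by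
  intro n
  induction n with
  | zero => rfl
  | succ n ih => rw [List.range_succ, Finset.sum_range_succ, ← ih]; simp

lemma count_descL (v : ℕ) : ∀ n, (descL n).count v = if 1 ≤ v ∧ v ≤ n then 1 else 0 := by
  intro n
  induction n with
  | zero =>
    rw [descL]
    rw [List.count_nil, if_neg (by omega)]
  | succ n ih =>
    rw [descL, List.count_cons, ih]
    by_cases h : v = n + 1
    · subst h
      simp
    · simp [h]
      split_ifs <;> omega

lemma count_replicate' (v q x : ℕ) : (List.replicate q x).count v = if v = x then q else 0 := by
  simp [List.count_replicate]
  split_ifs <;> simp_all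

lemma count_extrasCol {m : ℕ → ℕ → ℕ} {r c : ℕ} (v : ℕ) :
    (extrasCol m r c).count v = if 1 ≤ v ∧ v ≤ r then m (v-1) c - 1 else 0 := by
  rw [extrasCol, count_flatten', List.map_map, sum_map_range]
  have hpt : ∀ a, ((fun l => l.count v) ∘ fun a => List.replicate (m a c - 1) (a + 1)) a
      = if v = a + 1 then m a c - 1 else 0 := by
    intro a
    simp [count_replicate']
  simp only [hpt]
  by_cases h : 1 ≤ v ∧ v ≤ r
  · rw [if_pos h, Finset.sum_eq_single_of_mem (v-1) (by simp; omega)]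
    · rw [if_pos (by omega)]
    · intro b _ hb
      rw [if_neg (by omega)]
  · rw [if_neg h, Finset.sum_eq_zero]
    intro b hb
    simp only [Finset.mem_range] at hb
    rw [if_neg (by omega)]

lemma tailW_zero_eq {m : ℕ → ℕ → ℕ} {r k : ℕ} :
    tailW m r k 0 = ((List.range k).map (blockW m r)).flatten := by
  rw [List.range_eq_range', range'_map_flatten (m := m) (r := r) (k := k) k 0 (by omega)]

lemma count_tailW {m : ℕ → ℕ → ℕ} {r k : ℕ} (v : ℕ) :
    (tailW m r k 0).count v
      = ∑ c ∈ Finset.range k, ((if 1 ≤ v ∧ v ≤ r then 1 else 0) +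
          (if 1 ≤ v ∧ v ≤ r then m (v-1) c - 1 else 0)) := by
  rw [tailW_zero_eq, count_flatten', List.map_map, sum_map_range]
  apply Finset.sum_congr rfl
  intro c _
  simp only [Function.comp_apply, blockW, List.count_append, count_descL, count_extrasCol]

lemma count_toT_word {m : ℕ → ℕ → ℕ} {r k : ℕ} (hm : ∀ a < r, ∀ c < k, 1 ≤ m a c) (i : ℕ) :
    (tailW m r k 0).count (i+1) = if i < r then ∑ c ∈ Finset.range k, m i c else 0 := by
  rw [count_tailW]
  by_cases h : i < r
  · rw [if_pos h]
    apply Finset.sum_congr rfl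
    intro c hc
    rw [Finset.mem_range] at hc
    have := hm i h c hc
    rw [if_pos (by omega), if_pos (by omega)]
    simp
    omega
  · rw [if_neg h]
    apply Finset.sum_eq_zero
    intro c _
    rw [if_neg (by omega), if_neg (by omega)]
    simp

lemma count_msort (v : ℕ) (M : Multiset ℕ) : (msort M).count v = M.count v := by
  have h : (↑(msort M) : Multiset ℕ) = M := by rw [msort, Multiset.sort_eq]
  conv_rhs => rw [← h, Multiset.coe_count]

lemma count_colWord {r k c : ℕ} (T : ℕ → ℕ → Multiset ℕ) (hc : c < k) (v : ℕ) :
    (colWord (List.replicate r k) T c).count v = ∑ a ∈ Finset.range r, (T a c).count v := by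
  unfold colWord
  rw [colHeight_replicate hc, List.count_append, count_flatten', count_flatten',
    List.map_map, List.map_map, List.map_reverse, List.sum_reverse, sum_map_range, sum_map_range,
    ← Finset.sum_add_distrib]
  apply Finset.sum_congr rfl
  intro a _
  simp only [Function.comp_apply]
  rw [← count_msort v (T a c)]
  conv_rhs => rw [← List.take_append_drop 1 (msort (T a c))]
  rw [List.count_append]

lemma count_mvtWord {r k : ℕ} (T : ℕ → ℕ → Multiset ℕ) (hr : 0 < r) (v : ℕ) :
    (mvtWord (List.replicate r k) T).count v
      = ∑ c ∈ Finset.range k, ∑ a ∈ Finset.range r, (T a c).count v := by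
  unfold mvtWord
  rw [headD_replicate hr, count_flatten', List.map_map, sum_map_range]
  apply Finset.sum_congr rfl
  intro c hc
  rw [Finset.mem_range] at hc
  exact count_colWord T hc v
/-! ### Section G: LHS as image of the matrix set -/

theorem lhs_eq_image (n r k : ℕ) (hr : 0 < r) (hn : r ≤ n) (mu : List ℕ)
    (hlen : mu.length = r) :
    {T : ℕ → ℕ → Multiset ℕ | IsMVT n (List.replicate r k) T ∧
        MvtHW (List.replicate r k) T ∧
        ∀ i, (mvtWord (List.replicate r k) T).count (i + 1) = mu.getD i 0}
      = toT r k '' Mset r k mu := by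
  ext T
  simp only [Set.mem_setOf_eq, Set.mem_image]
  constructor
  · rintro ⟨hmvt, hhw, hwt⟩
    obtain ⟨hne, hz, hbd, hrow, hcol⟩ := hmvt
    have low : ∀ a, a < r → ∀ c, c < k → ∀ x ∈ T a c, a + 1 ≤ x := by
      intro a
      induction a with
      | zero => intro _ c hc x hx; exact (hbd 0 c x hx).1
      | succ a iha =>
        intro ha c hc x hx
        obtain ⟨y, hy⟩ := Multiset.exists_mem_of_ne_zero
          (hne a c (by rw [inShape_replicate]; exact ⟨by omega, hc⟩))
        have h1 := iha (by omega) c hc y hy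
        have h2 := hcol a c (by rw [inShape_replicate]; exact ⟨by omega, hc⟩) y hy x hx
        omega
    have upr : ∀ a, a < r → ∀ c, c < k → ∀ x ∈ T a c, x ≤ r := by
      intro a ha c hc x hx
      by_contra hxr
      push_neg at hxr
      have hx1 : 1 ≤ x := (hbd a c x hx).1
      have hcnt := hwt (x - 1)
      rw [show x - 1 + 1 = x by omega, count_mvtWord T hr] at hcnt
      rw [List.getD_eq_default _ _ (by omega)] at hcnt
      have h0 : (T a c).count x = 0 := by
        have h1 := (Finset.sum_eq_zero_iff.mp hcnt) c (Finset.mem_range.mpr hc)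
        exact (Finset.sum_eq_zero_iff.mp h1) a (Finset.mem_range.mpr ha)
      rw [Multiset.count_eq_zero] at h0
      exact h0 hx
    have upa : ∀ j a, a + j + 1 = r → ∀ c, c < k → ∀ x ∈ T a c, x ≤ a + 1 := by
      intro j
      induction j with
      | zero => intro a har c hc x hx; have := upr a (by omega) c hc x hx; omega
      | succ j ihj =>
        intro a har c hc x hx
        obtain ⟨y, hy⟩ := Multiset.exists_mem_of_ne_zero
          (hne (a+1) c (by rw [inShape_replicate]; exact ⟨by omega, hc⟩))
        have h1 := ihj (a+1) (by omega) c hc y hy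
        have h2 := hcol a c (by rw [inShape_replicate]; exact ⟨by omega, hc⟩) x hx y hy
        omega
    have heq : ∀ a, a < r → ∀ c, c < k → T a c = Multiset.replicate ((T a c).card) (a+1) := by
      intro a ha c hc
      apply Multiset.eq_replicate_card.mpr
      intro x hx
      have h1 := low a ha c hc x hx
      obtain ⟨j, hj⟩ : ∃ j, a + j + 1 = r := ⟨r - a - 1, by omega⟩
      have h2 := upa j a hj c hc x hx
      omega
    set m0 : ℕ → ℕ → ℕ := fun a c => if a < r ∧ c < k then (T a c).card else 0 with hm0
    have hTm : T = toT r k m0 := by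
      funext a c
      show T a c = if a < r ∧ c < k then
        Multiset.replicate (if a < r ∧ c < k then (T a c).card else 0) (a+1) else 0
      by_cases h : a < r ∧ c < k
      · rw [if_pos h, if_pos h]
        exact heq a h.1 c h.2
      · rw [if_neg h]
        exact hz a c (by rw [inShape_replicate]; exact h)
    have hm1 : ∀ a < r, ∀ c < k, 1 ≤ m0 a c := by
      intro a ha c hc
      have hne' := hne a c (by rw [inShape_replicate]; exact ⟨ha, hc⟩)
      have hp : 0 < (T a c).card := Multiset.card_pos.mpr hne'
      simp only [hm0, ha, hc, and_self, if_true]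
      omega
    refine ⟨m0, ⟨?_, hm1, ?_, ?_⟩, hTm.symm⟩
    · intro a c h
      simp only [hm0, h, if_false]
    · intro a ha
      have hcnt := hwt a
      rw [hTm, mvtWord_toT hr hm1, count_toT_word hm1, if_pos ha] at hcnt
      exact hcnt
    · refine (mvtHW_iff hr hm1).mp ?_
      rw [hTm] at hhw
      exact hhw
  · rintro ⟨m, ⟨hz, hpos, hsum, hineq⟩, rfl⟩
    refine ⟨⟨?_, ?_, ?_, ?_, ?_⟩, ?_, ?_⟩
    · intro a c hin
      rw [inShape_replicate] at hin
      show ¬ (if a < r ∧ c < k then Multiset.replicate (m a c) (a+1) else 0) = 0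
      rw [if_pos hin]
      have hp := hpos a hin.1 c hin.2
      intro hc0
      have := congrArg Multiset.card hc0
      simp [Multiset.card_replicate] at this
      omega
    · intro a c hin
      rw [inShape_replicate] at hin
      show (if a < r ∧ c < k then Multiset.replicate (m a c) (a+1) else 0) = 0
      rw [if_neg hin]
    · intro a c x hx
      rw [toT] at hx
      by_cases h : a < r ∧ c < k
      · rw [if_pos h] at hx
        have := Multiset.eq_of_mem_replicate hx
        omega
      · rw [if_neg h] at hx
        simp at hx
    · intro a c hin x hx y hy
      rw [inShape_replicate] at hin
      rw [toT, if_pos ⟨hin.1, by omega⟩] at hx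
      rw [toT, if_pos hin] at hy
      have h1 := Multiset.eq_of_mem_replicate hx
      have h2 := Multiset.eq_of_mem_replicate hy
      omega
    · intro a c hin x hx y hy
      rw [inShape_replicate] at hin
      rw [toT, if_pos ⟨by omega, hin.2⟩] at hx
      rw [toT, if_pos hin] at hy
      have h1 := Multiset.eq_of_mem_replicate hx
      have h2 := Multiset.eq_of_mem_replicate hy
      omega
    · exact (mvtHW_iff hr hpos).mpr hineq
    · intro i
      rw [mvtWord_toT hr hpos, count_toT_word hpos]
      by_cases h : i < r
      · rw [if_pos h]
        exact hsum i h
      · rw [if_neg h, List.getD_eq_default _ _ (by omega)]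
/-! ### Section H: SSYT side -/

lemma getD_map_sub (mu : List ℕ) (k a : ℕ) :
    (mu.map (· - k)).getD a 0 = mu.getD a 0 - k := by
  rw [List.getD_eq_getElem?_getD, List.getD_eq_getElem?_getD, List.getElem?_map]
  cases mu[a]? <;> simp

lemma inSkew_iff {mu : List ℕ} {k a j : ℕ} :
    InSkew (mu.map (· - k)) [] a j ↔ j < mu.getD a 0 - k := by
  unfold InSkew
  rw [getD_map_sub]
  simp

lemma getD_anti {mu : List ℕ} (hmu : IsPartition mu) {a b : ℕ} (hab : a ≤ b) :
    mu.getD b 0 ≤ mu.getD a 0 := by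
  by_cases hb : b < mu.length
  · have ha : a < mu.length := by omega
    rw [List.getD_eq_getElem _ _ hb, List.getD_eq_getElem _ _ ha]
    rcases Nat.eq_or_lt_of_le hab with rfl | h
    · exact le_refl _
    · exact List.pairwise_iff_getElem.mp hmu.1 a b ha hb h
  · rw [List.getD_eq_default _ _ (by omega)]
    exact Nat.zero_le _

def Dc (mu : List ℕ) (k : ℕ) (S : ℕ → ℕ → ℕ) (a v : ℕ) : ℕ :=
  ((Finset.range (mu.getD a 0 - k)).filter (fun j => S a j ≤ v)).card

open Classical in
noncomputable def SofM (mu : List ℕ) (r k : ℕ) (m : ℕ → ℕ → ℕ) (a j : ℕ) : ℕ :=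
  if a < r ∧ j < mu.getD a 0 - k then
    (if h : ∃ v, j < tl m k a (k - v) then Nat.find h else 0)
  else 0

def mOfS (mu : List ℕ) (r k : ℕ) (S : ℕ → ℕ → ℕ) (a c : ℕ) : ℕ :=
  if a < r ∧ c < k then 1 + (Dc mu k S a (k - c) - Dc mu k S a (k - c - 1)) else 0

lemma sum_sub_one {s : Finset ℕ} {f : ℕ → ℕ} (h : ∀ x ∈ s, 1 ≤ f x) :
    ∑ x ∈ s, (f x - 1) + s.card = ∑ x ∈ s, f x := by
  have heach : ∀ x ∈ s, (f x - 1) + 1 = f x := fun x hx => by have := h x hx; omega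
  calc ∑ x ∈ s, (f x - 1) + s.card = ∑ x ∈ s, ((f x - 1) + 1) := by
        rw [Finset.sum_add_distrib, Finset.sum_const, smul_eq_mul, mul_one]
    _ = ∑ x ∈ s, f x := Finset.sum_congr rfl heach

lemma tl_antitone {m : ℕ → ℕ → ℕ} {k a : ℕ} {c c' : ℕ} (h : c ≤ c') :
    tl m k a c' ≤ tl m k a c := by
  unfold tl
  exact Finset.sum_le_sum_of_subset (Finset.Ico_subset_Ico h (le_refl _))

lemma tl_row_zero {m : ℕ → ℕ → ℕ} {k a : ℕ} {mu : List ℕ} {r : ℕ} (ha : a < r)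
    (hpos : ∀ a < r, ∀ c < k, 1 ≤ m a c)
    (hsum : ∀ a < r, ∑ c ∈ Finset.range k, m a c = mu.getD a 0) :
    tl m k a 0 = mu.getD a 0 - k := by
  have h1 : ∑ c ∈ Finset.range k, (m a c - 1) + k = ∑ c ∈ Finset.range k, m a c := by
    have := sum_sub_one (s := Finset.range k) (f := m a)
      (fun x hx => hpos a ha x (Finset.mem_range.mp hx))
    simpa using this
  have h2 := hsum a ha
  unfold tl
  rw [← Finset.range_eq_Ico]
  omega

section SofMChar
variable {mu : List ℕ} {r k : ℕ} {m : ℕ → ℕ → ℕ}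
variable (hpos : ∀ a < r, ∀ c < k, 1 ≤ m a c)
    (hsum : ∀ a < r, ∑ c ∈ Finset.range k, m a c = mu.getD a 0)

include hpos hsum in
lemma SofM_le_iff {a j v : ℕ} (ha : a < r) (hj : j < mu.getD a 0 - k) :
    SofM mu r k m a j ≤ v ↔ j < tl m k a (k - v) := by
  have hex : ∃ v, j < tl m k a (k - v) := by
    refine ⟨k, ?_⟩
    rw [Nat.sub_self, tl_row_zero ha hpos hsum]
    exact hj
  rw [SofM, if_pos ⟨ha, hj⟩, dif_pos hex, Nat.find_le_iff]
  constructor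
  · rintro ⟨w, hwv, hw⟩
    exact lt_of_lt_of_le hw (tl_antitone (by omega))
  · intro h
    exact ⟨v, le_refl v, h⟩

include hpos hsum in
lemma SofM_le_k {a j : ℕ} (ha : a < r) (hj : j < mu.getD a 0 - k) :
    SofM mu r k m a j ≤ k := by
  rw [SofM_le_iff hpos hsum ha hj, Nat.sub_self, tl_row_zero ha hpos hsum]
  exact hj

include hpos hsum in
lemma SofM_pos {a j : ℕ} (ha : a < r) (hj : j < mu.getD a 0 - k) :
    1 ≤ SofM mu r k m a j := by
  by_contra h
  push_neg at h
  have h0 : SofM mu r k m a j ≤ 0 := by omega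
  rw [SofM_le_iff hpos hsum ha hj, Nat.sub_zero] at h0
  have : tl m k a k = 0 := by
    unfold tl
    rw [Finset.Ico_self]
    rfl
  omega

lemma filter_range_lt_card {L N : ℕ} (h : N ≤ L) :
    ((Finset.range L).filter (fun j => j < N)).card = N := by
  have : (Finset.range L).filter (fun j => j < N) = Finset.range N := by
    ext j
    simp only [Finset.mem_filter, Finset.mem_range]
    omega
  rw [this, Finset.card_range]

include hpos hsum in
lemma Dc_SofM {a v : ℕ} (ha : a < r) :
    Dc mu k (SofM mu r k m) a v = tl m k a (k - v) := by
  unfold Dc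
  have hfil : (Finset.range (mu.getD a 0 - k)).filter (fun j => SofM mu r k m a j ≤ v)
      = (Finset.range (mu.getD a 0 - k)).filter (fun j => j < tl m k a (k - v)) := by
    apply Finset.filter_congr
    intro j hj
    rw [Finset.mem_range] at hj
    exact SofM_le_iff hpos hsum ha hj
  rw [hfil]
  apply filter_range_lt_card
  rw [← tl_row_zero ha hpos hsum]
  exact tl_antitone (Nat.zero_le _)

end SofMChar
/-! ### Section I: RHS as image, and final assembly -/

theorem rhs_eq_image (r k : ℕ) (hk : 0 < k) (mu : List ℕ) (hmu : IsPartition mu)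
    (hlen : mu.length = r) (hge : ∀ i < r, k ≤ mu.getD i 0) :
    {S : ℕ → ℕ → ℕ | IsSkewSSYT (mu.map (· - k)) [] S ∧
        ∀ r' c, InSkew (mu.map (· - k)) [] r' c → S r' c ≤ k}
      = SofM mu r k '' Mset r k mu := by
  ext S
  simp only [Set.mem_setOf_eq, Set.mem_image]
  constructor
  · rintro ⟨⟨hS1, hS2, hS3, hS4⟩, hbk⟩
    have hmono : ∀ a, ∀ d j, j + d < mu.getD a 0 - k → S a j ≤ S a (j + d) := by
      intro a d
      induction d with
      | zero => intro j _; exact le_refl _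
      | succ d ih =>
        intro j hj
        have h1 : S a j ≤ S a (j + d) := ih j (by omega)
        have h2 : S a (j + d) ≤ S a (j + d + 1) :=
          hS3 a (j + d) (inSkew_iff.mpr (by omega)) (inSkew_iff.mpr (by omega))
        have h3 : j + (d + 1) = j + d + 1 := by omega
        rw [h3]
        omega
    have hchar : ∀ a v j, j < mu.getD a 0 - k → (S a j ≤ v ↔ j < Dc mu k S a v) := by
      intro a v j hj
      constructor
      · intro hle
        have hsub : Finset.range (j+1)
            ⊆ (Finset.range (mu.getD a 0 - k)).filter (fun j' => S a j' ≤ v) := by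
          intro j'' hj''
          rw [Finset.mem_range] at hj''
          rw [Finset.mem_filter, Finset.mem_range]
          refine ⟨by omega, ?_⟩
          have := hmono a (j - j'') j'' (by omega)
          rw [show j'' + (j - j'') = j by omega] at this
          omega
        have := Finset.card_le_card hsub
        rw [Finset.card_range] at this
        unfold Dc
        omega
      · intro hlt
        by_contra hgt
        push_neg at hgt
        have hsub : (Finset.range (mu.getD a 0 - k)).filter (fun j' => S a j' ≤ v)
            ⊆ Finset.range j := by
          intro j'' hj''
          rw [Finset.mem_filter, Finset.mem_range] at hj''
          rw [Finset.mem_range]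
          by_contra hge'
          push_neg at hge'
          have := hmono a (j'' - j) j (by omega)
          rw [show j + (j'' - j) = j'' by omega] at this
          omega
        have := Finset.card_le_card hsub
        rw [Finset.card_range] at this
        unfold Dc at hlt
        omega
    have hDzero : ∀ a, Dc mu k S a 0 = 0 := by
      intro a
      unfold Dc
      rw [Finset.card_eq_zero, Finset.filter_eq_empty_iff]
      intro j hj
      rw [Finset.mem_range] at hj
      have := hS2 a j (inSkew_iff.mpr hj)
      omega
    have hDtop : ∀ a, Dc mu k S a k = mu.getD a 0 - k := by
      intro a
      unfold Dc
      rw [Finset.filter_true_of_mem, Finset.card_range]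
      intro j hj
      rw [Finset.mem_range] at hj
      exact hbk a j (inSkew_iff.mpr hj)
    have hDmono : ∀ a v v', v ≤ v' → Dc mu k S a v ≤ Dc mu k S a v' := by
      intro a v v' hv
      unfold Dc
      apply Finset.card_le_card
      apply Finset.monotone_filter_right
      intro j hj
      omega
    have htl : ∀ a, a < r → ∀ nn c, c + nn = k →
        tl (mOfS mu r k S) k a c = Dc mu k S a (k - c) := by
      intro a ha nn
      induction nn with
      | zero =>
        intro c hc
        have h1 : tl (mOfS mu r k S) k a c = 0 := by
          unfold tl
          rw [show c = k by omega, Finset.Ico_self]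
          rfl
        rw [h1, show k - c = 0 by omega, hDzero]
      | succ nn ih =>
        intro c hc
        have hck : c < k := by omega
        rw [tl_succ hck, ih (c+1) (by omega)]
        rw [mOfS, if_pos ⟨ha, hck⟩]
        have hm := hDmono a (k - c - 1) (k - c) (by omega)
        have : k - (c+1) = k - c - 1 := by omega
        rw [this]
        omega
    have hmpos : ∀ a < r, ∀ c < k, 1 ≤ mOfS mu r k S a c := by
      intro a ha c hc
      rw [mOfS, if_pos ⟨ha, hc⟩]
      omega
    have hmsum : ∀ a < r, ∑ c ∈ Finset.range k, mOfS mu r k S a c = mu.getD a 0 := by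
      intro a ha
      have h1 := sum_sub_one (s := Finset.range k) (f := mOfS mu r k S a)
        (fun x hx => hmpos a ha x (Finset.mem_range.mp hx))
      have h2 := htl a ha k 0 (by omega)
      rw [Nat.sub_zero, hDtop] at h2
      unfold tl at h2
      rw [← Finset.range_eq_Ico] at h2
      have h3 := hge a ha
      rw [Finset.card_range] at h1
      omega
    refine ⟨mOfS mu r k S, ⟨?_, hmpos, hmsum, ?_⟩, ?_⟩
    · intro a c h
      rw [mOfS, if_neg h]
    · intro i h1 h2 c hc
      have e1 := htl i h2 (k - c) c (by omega)
      have e2 := htl (i-1) (by omega) (k - (c+1)) (c+1) (by omega)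
      rw [e1, e2]
      have hDcol : Dc mu k S i (k - c) ≤ Dc mu k S (i-1) (k - (c+1)) := by
        unfold Dc
        apply Finset.card_le_card
        intro j hj
        simp only [Finset.mem_filter, Finset.mem_range] at hj ⊢
        obtain ⟨hjl, hjv⟩ := hj
        have hlen2 : mu.getD i 0 ≤ mu.getD (i-1) 0 := getD_anti hmu (by omega)
        have hcol : S (i-1) j < S i j := by
          have hh := hS4 (i-1) j (inSkew_iff.mpr (by omega))
          rw [show i - 1 + 1 = i by omega] at hh
          exact hh (inSkew_iff.mpr (by omega))
        exact ⟨by omega, by omega⟩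
      exact hDcol
    · funext a j
      by_cases h : a < r ∧ j < mu.getD a 0 - k
      · have hSk := hbk a j (inSkew_iff.mpr h.2)
        apply le_antisymm
        · rw [SofM_le_iff hmpos hmsum h.1 h.2]
          have e := htl a h.1 (S a j) (k - S a j) (by omega)
          rw [e, show k - (k - S a j) = S a j by omega]
          exact (hchar a (S a j) j h.2).mp (le_refl _)
        · have h5 := le_refl (SofM mu r k (mOfS mu r k S) a j)
          rw [SofM_le_iff hmpos hmsum h.1 h.2] at h5
          have hyk : SofM mu r k (mOfS mu r k S) a j ≤ k := SofM_le_k hmpos hmsum h.1 h.2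
          have e := htl a h.1 (SofM mu r k (mOfS mu r k S) a j)
            (k - SofM mu r k (mOfS mu r k S) a j) (by omega)
          rw [e, show k - (k - SofM mu r k (mOfS mu r k S) a j)
            = SofM mu r k (mOfS mu r k S) a j by omega] at h5
          exact (hchar a _ j h.2).mpr h5
      · rw [SofM, if_neg h]
        refine (hS1 a j ?_).symm
        rw [inSkew_iff]
        intro hcon
        apply h
        refine ⟨?_, hcon⟩
        by_contra hh
        rw [List.getD_eq_default _ _ (by omega)] at hcon
        omega
  · rintro ⟨m, ⟨hz, hpos, hsum, hineq⟩, rfl⟩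
    have har : ∀ a j, j < mu.getD a 0 - k → a < r := by
      intro a j hin
      by_contra hh
      rw [List.getD_eq_default _ _ (by omega)] at hin
      omega
    refine ⟨⟨?_, ?_, ?_, ?_⟩, ?_⟩
    · intro a j hn
      rw [inSkew_iff] at hn
      rw [SofM, if_neg (by intro hcon; exact hn hcon.2)]
    · intro a j hin
      rw [inSkew_iff] at hin
      exact SofM_pos hpos hsum (har a j hin) hin
    · intro a j hin hin2
      rw [inSkew_iff] at hin hin2
      have ha := har a j hin
      rw [SofM_le_iff hpos hsum ha hin]
      have h5 := le_refl (SofM mu r k m a (j+1))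
      rw [SofM_le_iff hpos hsum ha hin2] at h5
      omega
    · intro a j hin hin2
      rw [inSkew_iff] at hin hin2
      have ha1 := har (a+1) j hin2
      have ha : a < r := by omega
      have hw1 : 1 ≤ SofM mu r k m (a+1) j := SofM_pos hpos hsum ha1 hin2
      have hwk : SofM mu r k m (a+1) j ≤ k := SofM_le_k hpos hsum ha1 hin2
      have h5 := le_refl (SofM mu r k m (a+1) j)
      rw [SofM_le_iff hpos hsum ha1 hin2] at h5
      have hiq := hineq (a+1) (by omega) (by omega) (k - SofM mu r k m (a+1) j) (by omega)
      rw [show a + 1 - 1 = a by omega] at hiq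
      have hlt : SofM mu r k m a j ≤ SofM mu r k m (a+1) j - 1 := by
        rw [SofM_le_iff hpos hsum ha hin,
          show k - (SofM mu r k m (a+1) j - 1) = (k - SofM mu r k m (a+1) j) + 1 by omega]
        omega
      omega
    · intro a j hin
      rw [inSkew_iff] at hin
      exact SofM_le_k hpos hsum (har a j hin) hin

lemma toT_injOn (r k : ℕ) (mu : List ℕ) : Set.InjOn (toT r k) (Mset r k mu) := by
  intro m1 hm1 m2 hm2 heq
  funext a c
  by_cases h : a < r ∧ c < k
  · have e := congrFun (congrFun heq a) c
    rw [toT, toT, if_pos h, if_pos h] at e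
    have := congrArg Multiset.card e
    simpa using this
  · rw [hm1.1 a c h, hm2.1 a c h]

lemma SofM_injOn (r k : ℕ) (mu : List ℕ) : Set.InjOn (SofM mu r k) (Mset r k mu) := by
  intro m1 hm1 m2 hm2 heq
  obtain ⟨hz1, hpos1, hsum1, _⟩ := hm1
  obtain ⟨hz2, hpos2, hsum2, _⟩ := hm2
  have htl : ∀ a, a < r → ∀ c, c ≤ k → tl m1 k a c = tl m2 k a c := by
    intro a ha c hc
    have e1 := Dc_SofM (m := m1) hpos1 hsum1 (v := k - c) ha
    have e2 := Dc_SofM (m := m2) hpos2 hsum2 (v := k - c) ha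
    rw [heq] at e1
    rw [show k - (k - c) = c by omega] at e1 e2
    omega
  funext a c
  by_cases h : a < r ∧ c < k
  · have e1 := htl a h.1 c (by omega)
    have e2 := htl a h.1 (c+1) (by omega)
    have f1 := tl_succ (m := m1) (k := k) (a := a) h.2
    have f2 := tl_succ (m := m2) (k := k) (a := a) h.2
    have g1 := hpos1 a h.1 c h.2
    have g2 := hpos2 a h.1 c h.2
    omega
  · rw [hz1 a c h, hz2 a c h]

/-- For the `r × k` rectangular shape `λ = (k, …, k)`, the number of
highest weight multiset-valued tableaux of shape `λ` and weight `μ` equals the number of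
semistandard Young tableaux of straight shape `(μ₁ − k, …, μ_r − k)` with entries at most
`k`. -/
theorem mvt_highest_weight_count_rectangle
    (n r k : ℕ) (hk : 0 < k) (hr : 0 < r) (hn : r ≤ n)
    (mu : List ℕ) (hmu : IsPartition mu) (hlen : mu.length = r)
    (hge : ∀ i < r, k ≤ mu.getD i 0) :
    Set.ncard {T : ℕ → ℕ → Multiset ℕ | IsMVT n (List.replicate r k) T ∧
        MvtHW (List.replicate r k) T ∧
        ∀ i, (mvtWord (List.replicate r k) T).count (i + 1) = mu.getD i 0}
      = Set.ncard {S : ℕ → ℕ → ℕ | IsSkewSSYT (mu.map (· - k)) [] S ∧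
        ∀ r' c, InSkew (mu.map (· - k)) [] r' c → S r' c ≤ k} := by
  rw [lhs_eq_image n r k hr hn mu hlen, rhs_eq_image r k hk mu hmu hlen hge,
    Set.ncard_image_of_injOn (toT_injOn r k mu), Set.ncard_image_of_injOn (SofM_injOn r k mu)]
end

section
/- Every highest weight valued-set tableau of shape λ has the property that its i-th row contains only entries equal to i. -/
/-! Valued-set tableaux. -/

/-- A semistandard Young tableau with each row partitioned into contiguous groups:
`entry` gives the entries, and `start r c = true` marks that box `(r, c)` is the
leftmost box (the buoy) of its group. -/
structure VST where
  entry : ℕ → ℕ → ℕ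
  start : ℕ → ℕ → Bool

/-- A valued-set tableau of shape `sh` with entries in `{1, …, n}`: a semistandard Young
tableau of shape `sh` whose rows are split into contiguous groups of equal entries. -/
def IsVST (n : ℕ) (sh : List ℕ) (T : VST) : Prop :=
  (∀ r c, ¬ InShape sh r c → T.entry r c = 0 ∧ T.start r c = false) ∧
  (∀ r c, InShape sh r c → 1 ≤ T.entry r c ∧ T.entry r c ≤ n) ∧
  (∀ r c, InShape sh r (c + 1) → T.entry r c ≤ T.entry r (c + 1)) ∧
  (∀ r c, InShape sh (r + 1) c → T.entry r c < T.entry (r + 1) c) ∧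
  (∀ r, InShape sh r 0 → T.start r 0 = true) ∧
  (∀ r c, InShape sh r (c + 1) → T.start r (c + 1) = false →
    T.entry r (c + 1) = T.entry r c)

/-- Tagged buoy reading word: the buoy entries, columns left to right, bottom to top
within each column; each letter is tagged with its box. -/
def vstTagged (sh : List ℕ) (T : VST) : List (ℕ × ℕ × ℕ) :=
  ((List.range (sh.headD 0)).map (fun c =>
    (List.range (colHeight sh c)).reverse.filterMap (fun r =>
      if T.start r c then some (T.entry r c, r, c) else none))).flatten

/-- The (buoy) reading word of a valued-set tableau. -/
def vstWord (sh : List ℕ) (T : VST) : List ℕ := (vstTagged sh T).map (·.1)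

/-- The column of the anchor (rightmost box) of the group whose buoy is in box `(r, c)`. -/
def anchorCol (sh : List ℕ) (T : VST) (r c : ℕ) : ℕ :=
  (((List.range (sh.getD r 0)).filter (fun c' =>
    decide (c ≤ c' ∧ (¬ InShape sh r (c' + 1) ∨ T.start r (c' + 1) = true)))).headD c)

/-- The crystal operator `f_i` on valued-set tableaux, acting on the group `g` of the
rightmost uncanceled `+`: if the entry immediately below the anchor of `g` is an `i+1`,
move the divider between `g` and the group immediately to the left of `g` one step down;
otherwise change every `i` in `g` to an `i+1`. -/
def vstF (sh : List ℕ) (i : ℕ) (T : VST) : Option VST :=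
  (fPos i (vstWord sh T)).map (fun j =>
    let t := (vstTagged sh T).getD j (0, 0, 0)
    let r := t.2.1
    let cs := t.2.2
    let ce := anchorCol sh T r cs
    if InShape sh (r + 1) ce ∧ T.entry (r + 1) ce = i + 1 then
      { T with start := fun r' c' =>
          if r' = r ∧ c' = cs then false
          else if r' = r + 1 ∧ c' = cs then true
          else T.start r' c' }
    else
      { T with entry := fun r' c' =>
          if r' = r ∧ cs ≤ c' ∧ c' ≤ ce then i + 1 else T.entry r' c' })

/-- The crystal operator `e_i` on valued-set tableaux, acting on the group `g` of the
leftmost uncanceled `-`: if the entry immediately above the anchor of `g` is an `i`,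
move the divider between `g` and the group immediately to the left of `g` one step up;
otherwise change every `i+1` in `g` to an `i`. -/
def vstE (sh : List ℕ) (i : ℕ) (T : VST) : Option VST :=
  (ePos i (vstWord sh T)).map (fun j =>
    let t := (vstTagged sh T).getD j (0, 0, 0)
    let r := t.2.1
    let cs := t.2.2
    let ce := anchorCol sh T r cs
    if 0 < r ∧ T.entry (r - 1) ce = i then
      { T with start := fun r' c' =>
          if r' = r ∧ c' = cs then false
          else if r' + 1 = r ∧ c' = cs then true
          else T.start r' c' }
    else
      { T with entry := fun r' c' =>
          if r' = r ∧ cs ≤ c' ∧ c' ≤ ce then i else T.entry r' c' })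

/-- A valued-set tableau is highest weight if it is killed by all raising operators. -/
def VstHW (sh : List ℕ) (T : VST) : Prop := ∀ i, 1 ≤ i → vstE sh i T = none


section AuxVST

lemma sigFold_aux (i : ℕ) (l : List ℕ) (acc : ℕ × ℕ) (h : i ∉ l) :
    (l.foldl (fun pm a =>
      if a = i then (if 0 < pm.2 then (pm.1, pm.2 - 1) else (pm.1 + 1, pm.2))
      else if a = i + 1 then (pm.1, pm.2 + 1) else pm) acc).1 = acc.1 := by
  induction l generalizing acc with
  | nil => rfl
  | cons a t ih =>
    simp only [List.mem_cons, not_or] at h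
    simp only [List.foldl_cons]
    rw [if_neg (fun he => h.1 he.symm)]
    by_cases h2 : a = i + 1
    · rw [if_pos h2]; exact ih _ h.2
    · rw [if_neg h2]; exact ih _ h.2

lemma sigFold_fst_eq_zero {i : ℕ} {l : List ℕ} (h : i ∉ l) : (sigFold i l).1 = 0 :=
  sigFold_aux i l (0, 0) h

lemma colHeight_iff {sh : List ℕ} (hs : sh.Pairwise (· ≥ ·)) (r c : ℕ) :
    r < colHeight sh c ↔ c < sh.getD r 0 := by
  induction sh generalizing r with
  | nil => simp [colHeight]
  | cons a t ih =>
    rw [List.pairwise_cons] at hs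
    by_cases hca : c < a
    · cases r with
      | zero => simp [colHeight, List.filter_cons, hca]
      | succ r =>
        have h1 : colHeight (a :: t) c = colHeight t c + 1 := by
          simp [colHeight, List.filter_cons, hca]
        rw [h1]
        simpa using ih hs.2 r
    · have hnil : t.filter (fun p => decide (c < p)) = [] := by
        rw [List.filter_eq_nil_iff]
        intro x hx
        simp only [decide_eq_true_eq]
        exact fun h => hca (lt_of_lt_of_le h (hs.1 x hx))
      have h0 : colHeight (a :: t) c = 0 := by
        simp [colHeight, List.filter_cons, hca, hnil]
      rw [h0]
      constructor
      · omega
      · intro h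
        exfalso
        cases r with
        | zero => exact hca (by simpa using h)
        | succ r =>
          simp only [List.getD_cons_succ] at h
          by_cases hr : r < t.length
          · rw [List.getD_eq_getElem t 0 hr] at h
            exact hca (lt_of_lt_of_le h (hs.1 _ (List.getElem_mem hr)))
          · rw [List.getD_eq_default t 0 (by omega)] at h; omega

lemma inShape_mono_row {sh : List ℕ} (hs : sh.Pairwise (· ≥ ·)) {r r' c : ℕ} (hrr : r ≤ r')
    (h : InShape sh r' c) : InShape sh r c := by
  unfold InShape at *
  have hlen : r' < sh.length := by
    by_contra hl
    rw [List.getD_eq_default sh 0 (by omega)] at h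
    omega
  rw [List.getD_eq_getElem sh 0 hlen] at h
  rw [List.getD_eq_getElem sh 0 (by omega : r < sh.length)]
  rcases eq_or_lt_of_le hrr with rfl | hlt
  · exact h
  · exact lt_of_lt_of_le h (List.pairwise_iff_getElem.mp hs r r' (by omega) hlen hlt)

lemma inShape_mono_col {sh : List ℕ} {r c c' : ℕ} (hcc : c ≤ c') (h : InShape sh r c') :
    InShape sh r c := by unfold InShape at *; omega

lemma headD_eq_getD {sh : List ℕ} : sh.headD 0 = sh.getD 0 0 := by
  cases sh <;> rfl

section T
variable {n : ℕ} {sh : List ℕ} {T : VST}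

lemma entry_row_mono (hT : IsVST n sh T) {r c c' : ℕ} (hcc : c ≤ c') (h : InShape sh r c') :
    T.entry r c ≤ T.entry r c' := by
  induction c' with
  | zero => rw [Nat.le_zero.mp hcc]
  | succ d ih =>
    rcases Nat.lt_succ_iff_lt_or_eq.mp (Nat.lt_succ_of_le hcc) with h1 | h1
    · exact le_trans (ih (by omega) (inShape_mono_col (Nat.le_succ d) h)) (hT.2.2.1 r d h)
    · rw [h1]

lemma entry_col_strict (hT : IsVST n sh T) (hs : sh.Pairwise (· ≥ ·)) {r r' c : ℕ}
    (hrr : r < r') (h : InShape sh r' c) : T.entry r c < T.entry r' c := by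
  induction r' with
  | zero => omega
  | succ d ih =>
    rcases Nat.lt_succ_iff_lt_or_eq.mp hrr with h1 | h1
    · exact lt_trans (ih h1 (inShape_mono_row hs (Nat.le_succ d) h)) (hT.2.2.2.1 d c h)
    · subst h1; exact hT.2.2.2.1 r c h

lemma entry_ge (hT : IsVST n sh T) (hs : sh.Pairwise (· ≥ ·)) :
    ∀ r c, InShape sh r c → r + 1 ≤ T.entry r c := by
  intro r
  induction r with
  | zero => intro c h; exact (hT.2.1 0 c h).1
  | succ d ih =>
    intro c h
    have h1 := ih c (inShape_mono_row hs (Nat.le_succ d) h)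
    have h2 := hT.2.2.2.1 d c h
    omega

lemma exists_buoy (hT : IsVST n sh T) :
    ∀ c r, InShape sh r c → ∃ c0, c0 ≤ c ∧ InShape sh r c0 ∧ T.start r c0 = true ∧
      T.entry r c0 = T.entry r c := by
  intro c
  induction c with
  | zero => intro r h; exact ⟨0, le_refl 0, h, hT.2.2.2.2.1 r h, rfl⟩
  | succ d ih =>
    intro r h
    by_cases hst : T.start r (d + 1) = true
    · exact ⟨d + 1, le_refl _, h, hst, rfl⟩
    · have heq := hT.2.2.2.2.2 r d h (by simpa using hst)
      obtain ⟨c0, h1, h2, h3, h4⟩ := ih r (inShape_mono_col (Nat.le_succ d) h)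
      exact ⟨c0, by omega, h2, h3, by rw [h4, heq]⟩

lemma tagged_mem (hs : sh.Pairwise (· ≥ ·)) {x : ℕ × ℕ × ℕ} (hx : x ∈ vstTagged sh T) :
    InShape sh x.2.1 x.2.2 ∧ T.start x.2.1 x.2.2 = true ∧ x.1 = T.entry x.2.1 x.2.2 := by
  simp only [vstTagged, List.mem_flatten, List.mem_map] at hx
  obtain ⟨l, ⟨c, hc, rfl⟩, hxl⟩ := hx
  simp only [List.mem_filterMap, List.mem_reverse, List.mem_range] at hxl
  obtain ⟨r, hr, hsome⟩ := hxl
  by_cases hst : T.start r c = true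
  · rw [if_pos hst] at hsome
    obtain rfl : (T.entry r c, r, c) = x := Option.some_injective _ hsome
    exact ⟨(colHeight_iff hs r c).mp hr, hst, rfl⟩
  · rw [if_neg hst] at hsome; exact absurd hsome (by simp)

lemma tagged_mem_of (hs : sh.Pairwise (· ≥ ·)) {r c : ℕ} (h : InShape sh r c)
    (hst : T.start r c = true) : (T.entry r c, r, c) ∈ vstTagged sh T := by
  have h0 : InShape sh 0 c := inShape_mono_row hs (Nat.zero_le r) h
  have hc : c < sh.headD 0 := by rw [headD_eq_getD]; exact h0
  have hr : r < colHeight sh c := (colHeight_iff hs r c).mpr h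
  simp only [vstTagged, List.mem_flatten, List.mem_map]
  refine ⟨_, ⟨c, List.mem_range.mpr hc, rfl⟩, ?_⟩
  simp only [List.mem_filterMap, List.mem_reverse, List.mem_range]
  exact ⟨r, hr, by rw [if_pos hst]⟩

def TagRel : (ℕ × ℕ × ℕ) → (ℕ × ℕ × ℕ) → Prop :=
  fun x y => x.2.2 < y.2.2 ∨ (x.2.2 = y.2.2 ∧ y.2.1 < x.2.1)

lemma tagged_pairwise : (vstTagged sh T).Pairwise TagRel := by
  unfold vstTagged
  rw [List.pairwise_flatten]
  constructor
  · intro l hl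
    simp only [List.mem_map] at hl
    obtain ⟨c, _, rfl⟩ := hl
    rw [List.pairwise_filterMap, List.pairwise_reverse]
    refine List.Pairwise.imp ?_ (List.pairwise_lt_range)
    intro r r' hlt x hx y hy
    by_cases h1 : T.start r' c = true
    · rw [if_pos h1] at hx
      by_cases h2 : T.start r c = true
      · rw [if_pos h2] at hy
        obtain rfl := (Option.mem_some_iff.mp hx).symm
        obtain rfl := (Option.mem_some_iff.mp hy).symm
        exact Or.inr ⟨rfl, hlt⟩
      · rw [if_neg h2] at hy; simp at hy
    · rw [if_neg h1] at hx; simp at hx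
  · rw [List.pairwise_map]
    refine List.Pairwise.imp ?_ (List.pairwise_lt_range)
    intro c c' hlt x hx y hy
    simp only [List.mem_filterMap, List.mem_reverse, List.mem_range] at hx hy
    obtain ⟨r, _, hx⟩ := hx
    obtain ⟨r', _, hy⟩ := hy
    by_cases h1 : T.start r c = true
    · rw [if_pos h1] at hx
      by_cases h2 : T.start r' c' = true
      · rw [if_pos h2] at hy
        obtain rfl := Option.some_injective _ hx
        obtain rfl := Option.some_injective _ hy
        exact Or.inl hlt
      · rw [if_neg h2] at hy; exact absurd hy (by simp)
    · rw [if_neg h1] at hx; exact absurd hx (by simp)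

end T

end AuxVST

/-- Every highest weight valued-set tableau of shape `λ` has all entries
of its `i`-th row (1-indexed) equal to `i`. -/
theorem vst_highest_weight_rows
    (n : ℕ) (lam : List ℕ) (hlam : IsPartition lam)
    (T : VST) (hT : IsVST n lam T) (hhw : VstHW lam T) :
    ∀ r c, InShape lam r c → T.entry r c = r + 1 := by
  classical
  obtain ⟨hs, -⟩ := hlam
  by_contra hcon
  push_neg at hcon
  obtain ⟨r0, c0, hin0, hne0⟩ := hcon
  have hbadex : ∃ v, ∃ r c, InShape lam r c ∧ T.entry r c = v ∧ r + 1 < v :=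
    ⟨T.entry r0 c0, r0, c0, hin0, rfl,
      lt_of_le_of_ne (entry_ge hT hs r0 c0 hin0) (Ne.symm hne0)⟩
  obtain ⟨r, c, hin, hent, hlt⟩ := Nat.find_spec hbadex
  set v := Nat.find hbadex with hv
  have hmin : ∀ u, u < v → ¬ (∃ r c, InShape lam r c ∧ T.entry r c = u ∧ r + 1 < u) :=
    fun u hu => Nat.find_min hbadex hu
  have hv2 : 2 ≤ v := by omega
  set i := v - 1 with hi
  have hvi : v = i + 1 := by omega
  have hi1 : 1 ≤ i := by omega
  have hrow_i : ∀ r' c', InShape lam r' c' → T.entry r' c' = i → r' + 1 = i := by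
    intro r' c' h1 h2
    have h3 := entry_ge hT hs r' c' h1
    by_contra hne
    exact hmin i (by omega) ⟨r', c', h1, h2, by omega⟩
  obtain ⟨cb, hcb, hinb, hstb, hentb⟩ := exists_buoy hT c r hin
  rw [hent] at hentb
  have hmem : (v, r, cb) ∈ vstTagged lam T := by
    have h := tagged_mem_of hs hinb hstb
    rwa [hentb] at h
  obtain ⟨j, hj, hWj⟩ := List.mem_iff_getElem.mp hmem
  have hlen : (vstWord lam T).length = (vstTagged lam T).length := by
    simp only [vstWord, List.length_map]
  have hjw : j < (vstWord lam T).length := by omega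
  have hwj : (vstWord lam T)[j] = v := by
    simp only [vstWord]
    rw [List.getElem_map]
    rw [hWj]
  have hsuf : i ∉ (vstWord lam T).drop (j + 1) := by
    intro hmemi
    obtain ⟨k, hk, hwk⟩ := List.mem_iff_getElem.mp hmemi
    rw [List.getElem_drop] at hwk
    rw [List.length_drop] at hk
    have hk2 : j + 1 + k < (vstTagged lam T).length := by omega
    have hwk' : ((vstTagged lam T)[j + 1 + k]'hk2).1 = i := by
      simp only [vstWord] at hwk
      rwa [List.getElem_map] at hwk
    set y := (vstTagged lam T)[j + 1 + k]'hk2 with hy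
    have hymem : y ∈ vstTagged lam T := List.getElem_mem hk2
    obtain ⟨hyin, hyst, hyent⟩ := tagged_mem hs hymem
    have hrel : TagRel (v, r, cb) y := by
      rw [← hWj]
      exact List.pairwise_iff_getElem.mp tagged_pairwise j (j + 1 + k) (by omega) hk2
        (by omega)
    have hyval : T.entry y.2.1 y.2.2 = i := by rw [← hyent]; exact hwk'
    have hyrow : y.2.1 + 1 = i := hrow_i y.2.1 y.2.2 hyin hyval
    simp only [TagRel] at hrel
    rcases hrel with h1 | ⟨h1, h2⟩
    · rcases eq_or_lt_of_le (show r ≤ y.2.1 by omega) with heq | hltr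
      · have hyin' : InShape lam r y.2.2 := by rw [heq]; exact hyin
        have hmono := entry_row_mono hT (le_of_lt h1) hyin'
        have hyv : T.entry r y.2.2 = i := by rw [heq]; exact hyval
        rw [hentb, hyv] at hmono
        omega
      · have hin2 : InShape lam y.2.1 cb := inShape_mono_col (le_of_lt h1) hyin
        have hstrict := entry_col_strict hT hs hltr hin2
        have hmono := entry_row_mono hT (le_of_lt h1) hyin
        rw [hentb] at hstrict
        rw [hyval] at hmono
        omega
    · omega
  have hmemf : j ∈ (List.range (vstWord lam T).length).filter
      (fun j => decide ((vstWord lam T)[j]? = some (i + 1) ∧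
        (sigFold i ((vstWord lam T).drop (j + 1))).1 = 0)) := by
    rw [List.mem_filter]
    refine ⟨List.mem_range.mpr hjw, ?_⟩
    simp only [decide_eq_true_eq]
    constructor
    · rw [List.getElem?_eq_getElem hjw, hwj, hvi]
    · exact sigFold_fst_eq_zero hsuf
  have hne : ePos i (vstWord lam T) ≠ none := by
    rw [ePos, Ne, List.head?_eq_none_iff]
    intro hnil
    rw [hnil] at hmemf
    exact absurd hmemf (List.not_mem_nil)
  have hhwi := hhw i hi1
  rw [vstE, Option.map_eq_none_iff] at hhwi
  exact hne hhwi
end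

section
/- Within a connected crystal component of valued-set tableaux of shape λ, the map sending a tableau to its reading word is injective. More precisely: for fixed numbers b_1, ..., b_{λ_1} (the number of buoy entries in each column), there is at most one valued-set tableau of shape λ with those column buoy counts and a given reading word. -/
/-- Number of buoy entries in column `c` of the valued-set tableau `T`. -/
def buoyCount (sh : List ℕ) (T : VST) (c : ℕ) : ℕ :=
  ((List.range (colHeight sh c)).filter (fun r => T.start r c)).length


/-! Auxiliary lemmas -/

lemma getElem?_filterMap_range' {α : Type} (g : ℕ → Option α) :
    ∀ m a j (v : α), ((List.range' a m).filterMap g)[j]? = some v →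
      ∃ t, a + j ≤ t ∧ t < a + m ∧ g t = some v := by
  intro m
  induction m with
  | zero => intro a j v h; simp at h
  | succ m ih =>
    intro a j v h
    rw [List.range'_succ, List.filterMap_cons] at h
    cases hg : g a with
    | none =>
      rw [hg] at h
      obtain ⟨t, h1, h2, h3⟩ := ih (a + 1) j v h
      exact ⟨t, by omega, by omega, h3⟩
    | some w =>
      rw [hg] at h
      cases j with
      | zero =>
        simp only [List.getElem?_cons_zero, Option.some.injEq] at h
        exact ⟨a, by omega, by omega, by rw [hg, h]⟩
      | succ j =>
        simp only [List.getElem?_cons_succ] at h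
        obtain ⟨t, h1, h2, h3⟩ := ih (a + 1) j v h
        exact ⟨t, by omega, by omega, h3⟩

lemma consec_getElem (E : ℕ → ℕ) (s : ℕ → Bool) :
    ∀ d a h, a + d < h → (∀ j, j ≤ d → s (a + j) = true) →
      ((List.range' a (h - a)).filterMap
        (fun r => if s r then some (E r) else none))[d]? = some (E (a + d)) := by
  intro d
  induction d with
  | zero =>
    intro a h h1 h2
    have hs : s a = true := by simpa using h2 0 (le_refl 0)
    have he : h - a = (h - (a + 1)) + 1 := by omega
    rw [he, List.range'_succ, List.filterMap_cons]
    simp [hs]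
  | succ d ih =>
    intro a h h1 h2
    have hs : s a = true := by simpa using h2 0 (by omega)
    have he : h - a = (h - (a + 1)) + 1 := by omega
    rw [he, List.range'_succ, List.filterMap_cons]
    simp only [hs, if_true, List.getElem?_cons_succ]
    have := ih (a + 1) h (by omega) (fun j hj => by
      have := h2 (j + 1) (by omega)
      have he2 : a + 1 + j = a + (j + 1) := by omega
      rw [he2]; exact this)
    have he3 : a + 1 + d = a + (d + 1) := by omega
    rw [he3] at this
    exact this

lemma range_split (r h : ℕ) (hrh : r ≤ h) :
    List.range h = List.range' 0 r ++ List.range' r (h - r) := by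
  have h2 := List.range'_append (s := 0) (m := r) (n := h - r) (step := 1)
  simp only [one_mul, Nat.zero_add] at h2
  rw [List.range_eq_range', h2]
  congr 1
  omega

lemma mono_of_step (h : ℕ) (f : ℕ → ℕ) (hstep : ∀ r, r + 1 < h → f r < f (r + 1)) :
    ∀ a b, a ≤ b → b < h → f a ≤ f b := by
  intro a b
  induction b with
  | zero =>
    intro hab _
    have : a = 0 := by omega
    rw [this]
  | succ b ihb =>
    intro hab hbh
    rcases Nat.eq_or_lt_of_le hab with h1 | h1
    · rw [h1]
    · exact le_trans (ihb (by omega) (by omega)) (le_of_lt (hstep b hbh))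

lemma core_aux (h : ℕ) (L E E' : ℕ → ℕ) (s s' : ℕ → Bool)
    (hL : ∀ a b, a ≤ b → b < h → L a ≤ L b)
    (hE : ∀ r, r + 1 < h → E r < E (r + 1))
    (hge' : ∀ r, r < h → L r ≤ E' r)
    (hcopy : ∀ r, r < h → s r = false → E r = L r)
    (r : ℕ) (hr : r < h) (hsr : s r = true) (hsr' : s' r = false)
    (htail : (List.range' r (h - r)).filterMap (fun t => if s t then some (E t) else none)
           = (List.range' r (h - r)).filterMap (fun t => if s' t then some (E' t) else none)) :
    False := by
  have key : ∀ d, r + d < h ∧ (∀ j, j ≤ d → s (r + j) = true) := by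
    intro d
    induction d with
    | zero =>
      refine ⟨hr, fun j hj => ?_⟩
      have : j = 0 := by omega
      rw [this]
      simpa using hsr
    | succ d ih =>
      obtain ⟨hd, hall⟩ := ih
      have hA := consec_getElem E s d r h hd hall
      rw [htail] at hA
      have hB : (List.range' r (h - r)).filterMap (fun t => if s' t then some (E' t) else none)
          = (List.range' (r + 1) (h - (r + 1))).filterMap
              (fun t => if s' t then some (E' t) else none) := by
        have he : h - r = (h - (r + 1)) + 1 := by omega
        rw [he, List.range'_succ, List.filterMap_cons]
        simp [hsr']
      rw [hB] at hA
      obtain ⟨t, ht1, ht2, ht3⟩ := getElem?_filterMap_range' _ _ _ _ _ hA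
      have hth : t < h := by omega
      have htv : E' t = E (r + d) := by
        cases hst : s' t with
        | false => rw [hst] at ht3; simp at ht3
        | true => rw [hst] at ht3; simpa using ht3
      have hLt : L (r + d + 1) ≤ E (r + d) := by
        calc L (r + d + 1) ≤ L t := hL _ _ (by omega) hth
        _ ≤ E' t := hge' t hth
        _ = E (r + d) := htv
      have hrd1 : r + d + 1 < h := by omega
      have hsnext : s (r + d + 1) = true := by
        by_contra hc
        have hc' : s (r + d + 1) = false := by
          cases hq : s (r + d + 1)
          · rfl
          · exact absurd hq hc
        have := hcopy (r + d + 1) hrd1 hc'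
        have hlt := hE (r + d) hrd1
        omega
      refine ⟨hrd1, fun j hj => ?_⟩
      rcases Nat.eq_or_lt_of_le hj with h1 | h1
      · rw [h1]; exact hsnext
      · exact hall j (by omega)
  obtain ⟨h1, _⟩ := key (h - r)
  omega

lemma core_col (h : ℕ) (L E E' : ℕ → ℕ) (s s' : ℕ → Bool)
    (hL : ∀ a b, a ≤ b → b < h → L a ≤ L b)
    (hE : ∀ r, r + 1 < h → E r < E (r + 1))
    (hE' : ∀ r, r + 1 < h → E' r < E' (r + 1))
    (hge : ∀ r, r < h → L r ≤ E r)
    (hge' : ∀ r, r < h → L r ≤ E' r)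
    (hcopy : ∀ r, r < h → s r = false → E r = L r)
    (hcopy' : ∀ r, r < h → s' r = false → E' r = L r)
    (hword : (List.range h).filterMap (fun t => if s t then some (E t) else none)
           = (List.range h).filterMap (fun t => if s' t then some (E' t) else none)) :
    ∀ r, r < h → s r = s' r ∧ E r = E' r := by
  intro r
  induction r using Nat.strong_induction_on with
  | _ r ih =>
    intro hr
    have hsplit := range_split r h (le_of_lt hr)
    rw [hsplit, List.filterMap_append, List.filterMap_append] at hword
    have hpre : (List.range' 0 r).filterMap (fun t => if s t then some (E t) else none)
        = (List.range' 0 r).filterMap (fun t => if s' t then some (E' t) else none) := by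
      apply List.filterMap_congr
      intro x hx
      have hxr : x < r := by
        have := List.mem_range'_1.mp hx
        omega
      obtain ⟨h1, h2⟩ := ih x hxr (by omega)
      rw [h1, h2]
    rw [hpre] at hword
    have htail := List.append_cancel_left hword
    have he : h - r = (h - (r + 1)) + 1 := by omega
    cases hsr : s r with
    | true =>
      cases hsr' : s' r with
      | true =>
        refine ⟨rfl, ?_⟩
        rw [he, List.range'_succ, List.filterMap_cons, List.filterMap_cons] at htail
        simp only [hsr, hsr', if_true] at htail
        exact (List.cons.injEq _ _ _ _).mp htail |>.1
      | false => exact absurd (core_aux h L E E' s s' hL hE hge' hcopy r hr hsr hsr' htail) id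
    | false =>
      cases hsr' : s' r with
      | true => exact absurd (core_aux h L E' E s' s hL hE' hge hcopy' r hr hsr' hsr htail.symm) id
      | false =>
        refine ⟨rfl, ?_⟩
        rw [hcopy r hr hsr, hcopy' r hr hsr']

lemma getD_le_headD : ∀ (sh : List ℕ), sh.Pairwise (· ≥ ·) → ∀ r, sh.getD r 0 ≤ sh.headD 0 := by
  intro sh hs r
  cases sh with
  | nil => simp
  | cons a l =>
    cases r with
    | zero => simp
    | succ r =>
      simp only [List.getD_cons_succ, List.headD_cons]
      rw [List.pairwise_cons] at hs
      by_cases hrl : r < l.length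
      · rw [List.getD_eq_getElem l 0 hrl]
        exact hs.1 _ (List.getElem_mem hrl)
      · rw [List.getD_eq_default l 0 (by omega)]
        omega

lemma inShape_iff : ∀ (sh : List ℕ), sh.Pairwise (· ≥ ·) → ∀ r c,
    (InShape sh r c ↔ r < colHeight sh c) := by
  intro sh
  induction sh with
  | nil => intro _ r c; simp [InShape, colHeight]
  | cons a l ih =>
    intro hs r c
    rw [List.pairwise_cons] at hs
    by_cases hca : c < a
    · have hch : colHeight (a :: l) c = colHeight l c + 1 := by
        simp [colHeight, List.filter_cons, hca, Nat.add_comm]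
      rw [hch]
      cases r with
      | zero => simp [InShape, hca]
      | succ r =>
        have h1 : InShape (a :: l) (r + 1) c ↔ InShape l r c := by
          simp [InShape]
        rw [h1, ih hs.2 r c]
        omega
    · have hch : colHeight (a :: l) c = 0 := by
        simp only [colHeight, List.length_eq_zero_iff]
        rw [List.filter_eq_nil_iff]
        intro x hx
        simp only [decide_eq_true_eq]
        rcases List.mem_cons.mp hx with h1 | h1
        · omega
        · have := hs.1 x h1
          omega
      rw [hch]
      simp only [Nat.not_lt_zero, iff_false]
      have := getD_le_headD (a :: l) (List.pairwise_cons.mpr hs) r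
      simp only [List.headD_cons] at this
      simp only [InShape]
      omega

lemma colHeight_anti (sh : List ℕ) (c c' : ℕ) (hcc : c ≤ c') :
    colHeight sh c' ≤ colHeight sh c := by
  apply List.Sublist.length_le
  apply List.monotone_filter_right
  intro a ha
  simp only [decide_eq_true_eq] at *
  omega

lemma colHeight_eq_zero (sh : List ℕ) (hs : sh.Pairwise (· ≥ ·)) (c : ℕ) (hc : sh.headD 0 ≤ c) :
    colHeight sh c = 0 := by
  simp only [colHeight, List.length_eq_zero_iff]
  rw [List.filter_eq_nil_iff]
  intro x hx
  simp only [decide_eq_true_eq]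
  cases sh with
  | nil => simp at hx
  | cons a l =>
    simp only [List.headD_cons] at hc
    rw [List.pairwise_cons] at hs
    rcases List.mem_cons.mp hx with h1 | h1
    · omega
    · have := hs.1 x h1
      omega

def colEntries (sh : List ℕ) (T : VST) (c : ℕ) : List ℕ :=
  (List.range (colHeight sh c)).filterMap
    (fun r => if T.start r c then some (T.entry r c) else none)

lemma vstWord_eq (sh : List ℕ) (T : VST) :
    vstWord sh T
      = ((List.range (sh.headD 0)).map (fun c => (colEntries sh T c).reverse)).flatten := by
  unfold vstWord vstTagged colEntries
  rw [List.map_flatten, List.map_map]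
  congr 1
  apply List.map_congr_left
  intro c _
  simp only [Function.comp]
  rw [List.map_filterMap, ← List.filterMap_reverse]
  apply List.filterMap_congr
  intro r _
  cases T.start r c <;> simp

lemma length_filterMap_if {α β : Type} (p : α → Bool) (q : α → β) (l : List α) :
    (l.filterMap (fun a => if p a then some (q a) else none)).length = (l.filter p).length := by
  induction l with
  | nil => simp
  | cons a l ihl =>
    rw [List.filterMap_cons, List.filter_cons]
    cases hpa : p a <;> simp [ihl]

lemma colEntries_length (sh : List ℕ) (T : VST) (c : ℕ) :
    (colEntries sh T c).length = buoyCount sh T c := by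
  unfold colEntries buoyCount
  exact length_filterMap_if _ _ _

lemma flatten_map_range_eq {α : Type} :
    ∀ (K : ℕ) (F G : ℕ → List α), (∀ c, c < K → (F c).length = (G c).length) →
      ((List.range K).map F).flatten = ((List.range K).map G).flatten →
      ∀ c, c < K → F c = G c := by
  intro K
  induction K with
  | zero => intro F G _ _ c hc; omega
  | succ K ih =>
    intro F G hlen hfl c hc
    rw [List.range_succ_eq_map] at hfl
    simp only [List.map_cons, List.map_map, List.flatten_cons] at hfl
    obtain ⟨hF0, htl⟩ := List.append_inj hfl (hlen 0 (by omega))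
    cases c with
    | zero => exact hF0
    | succ c =>
      refine ih (fun x => F (x + 1)) (fun x => G (x + 1))
        (fun x hx => hlen (x + 1) (by omega)) ?_ c (by omega)
      exact htl


lemma col_step (n : ℕ) (lam : List ℕ) (hlam : IsPartition lam)
    (T T' : VST) (hT : IsVST n lam T) (hT' : IsVST n lam T') (c : ℕ) (L : ℕ → ℕ)
    (hLmono : ∀ a b, a ≤ b → b < colHeight lam c → L a ≤ L b)
    (hgeL : ∀ r, r < colHeight lam c → L r ≤ T.entry r c)
    (hgeL' : ∀ r, r < colHeight lam c → L r ≤ T'.entry r c)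
    (hcopyL : ∀ r, r < colHeight lam c → T.start r c = false → T.entry r c = L r)
    (hcopyL' : ∀ r, r < colHeight lam c → T'.start r c = false → T'.entry r c = L r)
    (hcol : colEntries lam T c = colEntries lam T' c) :
    ∀ r, T.entry r c = T'.entry r c ∧ T.start r c = T'.start r c := by
  intro r
  have hiff := inShape_iff lam hlam.1
  by_cases hrh : r < colHeight lam c
  · have hmain := core_col (colHeight lam c) L (fun r => T.entry r c) (fun r => T'.entry r c)
      (fun r => T.start r c) (fun r => T'.start r c) hLmono
      (fun r hr => hT.2.2.2.1 r c ((hiff (r + 1) c).mpr hr))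
      (fun r hr => hT'.2.2.2.1 r c ((hiff (r + 1) c).mpr hr))
      hgeL hgeL' hcopyL hcopyL' (by simpa [colEntries] using hcol) r hrh
    exact ⟨hmain.2, hmain.1⟩
  · have hns : ¬ InShape lam r c := fun hc => hrh ((hiff r c).mp hc)
    obtain ⟨h1, h2⟩ := hT.1 r c hns
    obtain ⟨h1', h2'⟩ := hT'.1 r c hns
    rw [h1, h2, h1', h2']
    exact ⟨rfl, rfl⟩

/-- A valued-set tableau of shape `λ` is determined by its column buoy
counts and its reading word: if two valued-set tableaux of shape `λ` have the same number
of buoys in every column and the same reading word, they are equal.  (In particular, the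
reading word is injective on each connected crystal component, since the crystal
operators preserve the column buoy counts.) -/
theorem vst_reading_word_injective
    (n : ℕ) (lam : List ℕ) (hlam : IsPartition lam)
    (T T' : VST) (hT : IsVST n lam T) (hT' : IsVST n lam T')
    (hb : ∀ c, buoyCount lam T c = buoyCount lam T' c)
    (hw : vstWord lam T = vstWord lam T') :
    T = T' := by
  have hsort := hlam.1
  have hiff := inShape_iff lam hsort
  have hcole : ∀ c, colEntries lam T c = colEntries lam T' c := by
    intro c
    by_cases hcK : c < lam.headD 0
    · have hW := vstWord_eq lam T
      have hW' := vstWord_eq lam T'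
      rw [hW, hW'] at hw
      have := flatten_map_range_eq (lam.headD 0) _ _ (fun c hc => by
          simp only [List.length_reverse, colEntries_length]
          exact hb c) hw c hcK
      exact List.reverse_injective this
    · have h0 : colHeight lam c = 0 := colHeight_eq_zero lam hsort c (by omega)
      simp [colEntries, h0]
  have main : ∀ c r, T.entry r c = T'.entry r c ∧ T.start r c = T'.start r c := by
    intro c
    induction c with
    | zero =>
      exact col_step n lam hlam T T' hT hT' 0 (fun _ => 0)
        (fun a b _ _ => le_refl 0) (fun r _ => Nat.zero_le _) (fun r _ => Nat.zero_le _)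
        (fun r hr hf => absurd (hT.2.2.2.2.1 r ((hiff r 0).mpr hr)) (by simp [hf]))
        (fun r hr hf => absurd (hT'.2.2.2.2.1 r ((hiff r 0).mpr hr)) (by simp [hf]))
        (hcole 0)
    | succ c ihc =>
      have hhle : colHeight lam (c + 1) ≤ colHeight lam c :=
        colHeight_anti lam c (c + 1) (by omega)
      refine col_step n lam hlam T T' hT hT' (c + 1) (fun r => T.entry r c)
        ?_ ?_ ?_ ?_ ?_ (hcole (c + 1))
      · intro a b hab hbh
        exact mono_of_step (colHeight lam c) (fun r => T.entry r c)
          (fun r hr => hT.2.2.2.1 r c ((hiff (r + 1) c).mpr hr)) a b hab (by omega)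
      · intro r hr
        exact hT.2.2.1 r c ((hiff r (c + 1)).mpr hr)
      · intro r hr
        show T.entry r c ≤ T'.entry r (c + 1)
        rw [(ihc r).1]
        exact hT'.2.2.1 r c ((hiff r (c + 1)).mpr hr)
      · intro r hr hf
        exact hT.2.2.2.2.2 r c ((hiff r (c + 1)).mpr hr) hf
      · intro r hr hf
        show T'.entry r (c + 1) = T.entry r c
        rw [(ihc r).1]
        exact hT'.2.2.2.2.2 r c ((hiff r (c + 1)).mpr hr) hf
  cases T with
  | mk e s =>
    cases T' with
    | mk e' s' =>
      simp only [VST.mk.injEq]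
      exact ⟨funext fun r => funext fun c => (main c r).1,
             funext fun r => funext fun c => (main c r).2⟩
end

section
/- For valued-set tableaux of a single row shape (λ = (k)), every tableau is determined by its entry value sequence and group partition, and the connected crystal components are as follows: the set of valued-set tableaux of shape (k) with exactly m groups and entries at most n is in weight-preserving bijection with pairs consisting of a semistandard row of length m (an element of B(mΛ_1)) and a choice of group sizes summing to k, i.e., a composition of k into m positive parts; in particular there are C(k−1, m−1) connected components each isomorphic to B(mΛ_1). -/
/-- The columns of the buoys of a single-row valued-set tableau of shape `(k)`. -/
def buoyCols (k : ℕ) (T : VST) : List ℕ :=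
  (List.range k).filter (fun c => T.start 0 c)

/-- The sizes of the groups of a single-row valued-set tableau of shape `(k)`, as a
composition of `k`. -/
def groupSizes (k : ℕ) (T : VST) : List ℕ :=
  (List.range (buoyCols k T).length).map
    (fun j => (buoyCols k T).getD (j + 1) k - (buoyCols k T).getD j 0)

section Aux

lemma inShape_single {k r c : ℕ} : InShape [k] r c ↔ r = 0 ∧ c < k := by
  rcases r with _ | r
  · simp [InShape]
  · simp [InShape, List.getD]

lemma flatten_map_ite {α : Type*} (l : List ℕ) (p : ℕ → Bool) (g : ℕ → α) :
    (l.map (fun c => if p c then [g c] else [])).flatten = (l.filter p).map g := by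
  induction l with
  | nil => simp
  | cons a t ih =>
    simp only [List.map_cons, List.flatten_cons, List.filter_cons]
    split <;> simp [ih]

lemma vstTagged_single (k : ℕ) (T : VST) :
    vstTagged [k] T = (buoyCols k T).map (fun c => (T.entry 0 c, 0, c)) := by
  unfold vstTagged buoyCols
  have h1 : ([k] : List ℕ).headD 0 = k := rfl
  rw [h1]
  have h2 : ∀ c ∈ List.range k,
      (List.range (colHeight [k] c)).reverse.filterMap (fun r =>
        if T.start r c then some (T.entry r c, r, c) else none)
      = if T.start 0 c then [(T.entry 0 c, 0, c)] else [] := by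
    intro c hc
    rw [List.mem_range] at hc
    have h3 : colHeight [k] c = 1 := by
      unfold colHeight
      rw [List.filter_cons, if_pos (by simpa using hc)]
      simp
    rw [h3]
    show ([0] : List ℕ).filterMap _ = _
    simp only [List.filterMap_cons, List.filterMap_nil]
    split <;> simp_all
  rw [List.map_congr_left h2, flatten_map_ite]

lemma vstWord_single (k : ℕ) (T : VST) :
    vstWord [k] T = (buoyCols k T).map (T.entry 0) := by
  rw [vstWord, vstTagged_single, List.map_map]
  rfl

lemma buoyCols_sorted (k : ℕ) (T : VST) : (buoyCols k T).Pairwise (· < ·) :=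
  (List.pairwise_lt_range (n := k)).filter _

lemma mem_buoyCols {k : ℕ} {T : VST} {c : ℕ} :
    c ∈ buoyCols k T ↔ c < k ∧ T.start 0 c = true := by
  simp [buoyCols, List.mem_filter]

end Aux
section Aux2

lemma buoyCols_getElem_lt {k : ℕ} {T : VST} {j : ℕ} (h : j < (buoyCols k T).length) :
    (buoyCols k T)[j] < k :=
  (mem_buoyCols.1 (List.getElem_mem h)).1

lemma buoyCols_strict {k : ℕ} {T : VST} {j1 j2 : ℕ} (h12 : j1 < j2)
    (h : j2 < (buoyCols k T).length) :
    (buoyCols k T)[j1]'(h12.trans h) < (buoyCols k T)[j2] := by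
  exact List.pairwise_iff_getElem.1 (buoyCols_sorted k T) j1 j2 _ h h12

lemma entry_mono {n k : ℕ} {T : VST} (h : IsVST n [k] T) :
    ∀ {c d : ℕ}, c ≤ d → d < k → T.entry 0 c ≤ T.entry 0 d := by
  intro c d hcd hd
  induction d with
  | zero =>
    have : c = 0 := by omega
    subst this; exact le_refl _
  | succ d ih =>
    rcases Nat.eq_or_lt_of_le hcd with rfl | hlt
    · exact le_refl _
    · exact le_trans (ih (by omega) (by omega))
        (h.2.2.1 0 d (inShape_single.2 ⟨rfl, hd⟩))

/-- The cut function: `j`-th buoy column, or `k` past the end. -/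
def sFun (k : ℕ) (T : VST) (j : ℕ) : ℕ := (buoyCols k T).getD j k

lemma sFun_lt {k : ℕ} {T : VST} {j : ℕ} (h : j < (buoyCols k T).length) :
    sFun k T j < k := by
  rw [sFun, List.getD_eq_getElem _ _ h]; exact buoyCols_getElem_lt h

lemma sFun_mono {k : ℕ} {T : VST} : Monotone (sFun k T) := by
  intro j1 j2 h12
  rcases Nat.eq_or_lt_of_le h12 with rfl | hlt
  · exact le_refl _
  unfold sFun
  by_cases h2 : j2 < (buoyCols k T).length
  · rw [List.getD_eq_getElem _ _ h2, List.getD_eq_getElem _ _ (hlt.trans h2)]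
    exact (buoyCols_strict hlt h2).le
  · have e2 : (buoyCols k T).getD j2 k = k := List.getD_eq_default _ _ (by omega)
    rw [e2]
    by_cases h1 : j1 < (buoyCols k T).length
    · rw [List.getD_eq_getElem _ _ h1]; exact (buoyCols_getElem_lt h1).le
    · rw [List.getD_eq_default _ _ (by omega)]

lemma sFun_strict {k : ℕ} {T : VST} {j : ℕ} (h : j < (buoyCols k T).length) :
    sFun k T j < sFun k T (j + 1) := by
  unfold sFun
  rw [List.getD_eq_getElem _ _ h]
  by_cases h2 : j + 1 < (buoyCols k T).length
  · rw [List.getD_eq_getElem _ _ h2]; exact buoyCols_strict (Nat.lt_succ_self j) h2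
  · rw [List.getD_eq_default _ _ (by omega)]; exact buoyCols_getElem_lt h

lemma sFun_zero {n k : ℕ} {T : VST} (h : IsVST n [k] T) (hk : 0 < k) :
    sFun k T 0 = 0 := by
  have h0 : (0 : ℕ) ∈ buoyCols k T :=
    mem_buoyCols.2 ⟨hk, h.2.2.2.2.1 0 (inShape_single.2 ⟨rfl, hk⟩)⟩
  obtain ⟨j, hj, hj0⟩ := List.getElem_of_mem h0
  have hlen : 0 < (buoyCols k T).length := by omega
  rw [sFun, List.getD_eq_getElem _ _ hlen]
  rcases Nat.eq_or_lt_of_le (Nat.zero_le j) with rfl | hlt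
  · exact hj0
  · exact absurd (hj0 ▸ buoyCols_strict hlt hj) (by omega)

lemma groupSizes_eq {k : ℕ} (T : VST) :
    groupSizes k T = (List.range (buoyCols k T).length).map
      (fun j => sFun k T (j + 1) - sFun k T j) := by
  unfold groupSizes
  apply List.map_congr_left
  intro j hj
  rw [List.mem_range] at hj
  rw [sFun, sFun, List.getD_eq_getElem _ _ hj, List.getD_eq_getElem _ _ hj]

lemma groupSizes_sum {n k : ℕ} {T : VST} (h : IsVST n [k] T) (hk : 0 < k) :
    (groupSizes k T).sum = k := by
  rw [groupSizes_eq,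
    show ((List.range (buoyCols k T).length).map
        (fun j => sFun k T (j + 1) - sFun k T j)).sum
      = ∑ j ∈ Finset.range (buoyCols k T).length, (sFun k T (j + 1) - sFun k T j) from rfl,
    Finset.sum_range_tsub sFun_mono, sFun_zero h hk, Nat.sub_zero, sFun,
    List.getD_eq_default _ _ (le_refl _)]

lemma groupSizes_pos {k : ℕ} {T : VST} : ∀ x ∈ groupSizes k T, 0 < x := by
  rw [groupSizes_eq]
  intro x hx
  obtain ⟨j, hj, rfl⟩ := List.mem_map.1 hx
  rw [List.mem_range] at hj
  have := sFun_strict hj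
  omega

lemma groupSizes_length {k : ℕ} (T : VST) :
    (groupSizes k T).length = (buoyCols k T).length := by
  simp [groupSizes]

lemma sFun_eq_take_sum {n k : ℕ} {T : VST} (h : IsVST n [k] T) (hk : 0 < k) :
    ∀ j, sFun k T j = ((groupSizes k T).take j).sum := by
  intro j
  induction j with
  | zero => simp [sFun_zero h hk]
  | succ j ih =>
    by_cases hj : j < (buoyCols k T).length
    · rw [List.take_succ, List.sum_append, ← ih]
      have hg : (groupSizes k T)[j]? = some (sFun k T (j+1) - sFun k T j) := by
        rw [groupSizes_eq, List.getElem?_eq_getElem (by simpa using hj)]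
        simp
      rw [hg]
      have := sFun_strict hj
      simp; omega
    · have hlen : (groupSizes k T).length ≤ j := by rw [groupSizes_length]; omega
      rw [List.take_of_length_le (by omega), ← List.take_of_length_le hlen, ← ih,
        sFun, sFun, List.getD_eq_default _ _ (by omega),
        List.getD_eq_default _ _ (by omega)]

end Aux2
section Aux3

lemma VST.ext' {T1 T2 : VST} (he : T1.entry = T2.entry) (hs : T1.start = T2.start) :
    T1 = T2 := by
  cases T1; cases T2; simp_all

lemma vstWord_length_eq (k : ℕ) (T : VST) :
    (vstWord [k] T).length = (buoyCols k T).length := by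
  rw [vstWord_single, List.length_map]

lemma vstWord_sorted {n k : ℕ} {T : VST} (h : IsVST n [k] T) :
    (vstWord [k] T).Pairwise (· ≤ ·) := by
  rw [vstWord_single, List.pairwise_iff_get]
  intro i j hij
  have hj : (j : ℕ) < (buoyCols k T).length := by
    have := j.isLt; simpa using this
  have hi : (i : ℕ) < (buoyCols k T).length := lt_trans hij hj
  simp only [List.get_eq_getElem, List.getElem_map]
  exact entry_mono h (le_of_lt (buoyCols_strict hij hj)) (buoyCols_getElem_lt hj)

lemma vstWord_bounds {n k : ℕ} {T : VST} (h : IsVST n [k] T) :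
    ∀ x ∈ vstWord [k] T, 1 ≤ x ∧ x ≤ n := by
  rw [vstWord_single]
  intro x hx
  obtain ⟨c, hc, rfl⟩ := List.mem_map.1 hx
  exact h.2.1 0 c (inShape_single.2 ⟨rfl, (mem_buoyCols.1 hc).1⟩)

lemma vst_inj {n k : ℕ} (hk : 0 < k) {T1 T2 : VST}
    (h1 : IsVST n [k] T1) (h2 : IsVST n [k] T2)
    (hw : vstWord [k] T1 = vstWord [k] T2)
    (hg : groupSizes k T1 = groupSizes k T2) : T1 = T2 := by
  have hlen : (buoyCols k T1).length = (buoyCols k T2).length := by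
    rw [← groupSizes_length, ← groupSizes_length, hg]
  have hsF : ∀ j, sFun k T1 j = sFun k T2 j := by
    intro j
    rw [sFun_eq_take_sum h1 hk, sFun_eq_take_sum h2 hk, hg]
  have hB : buoyCols k T1 = buoyCols k T2 := by
    apply List.ext_getElem hlen
    intro j hj1 hj2
    have := hsF j
    rwa [sFun, sFun, List.getD_eq_getElem _ _ hj1, List.getD_eq_getElem _ _ hj2] at this
  have hstart : T1.start = T2.start := by
    funext r c
    by_cases hin : InShape [k] r c
    · obtain ⟨rfl, hck⟩ := inShape_single.1 hin
      by_cases hs : T1.start 0 c = true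
      · rw [hs, ((mem_buoyCols (T := T2)).1 (hB ▸ mem_buoyCols.2 ⟨hck, hs⟩)).2]
      · have hs2 : ¬ T2.start 0 c = true := fun hs2 =>
          hs ((mem_buoyCols.1 (hB.symm ▸ mem_buoyCols.2 ⟨hck, hs2⟩)).2)
        rw [Bool.not_eq_true] at hs hs2; rw [hs, hs2]
    · rw [(h1.1 r c hin).2, (h2.1 r c hin).2]
  have key : ∀ c, c < k → T1.entry 0 c = T2.entry 0 c := by
    intro c
    induction c using Nat.strong_induction_on with
    | _ c ih =>
      intro hc
      by_cases hs : T1.start 0 c = true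
      · obtain ⟨j, hj, hjc⟩ := List.getElem_of_mem (mem_buoyCols.2 ⟨hc, hs⟩)
        have e1 : (vstWord [k] T1)[j]? = some (T1.entry 0 c) := by
          rw [vstWord_single, List.getElem?_map, List.getElem?_eq_getElem hj]
          simp [hjc]
        have e2 : (vstWord [k] T2)[j]? = some (T2.entry 0 c) := by
          rw [vstWord_single, List.getElem?_map, ← hB, List.getElem?_eq_getElem hj]
          simp [hjc]
        rw [hw] at e1
        exact Option.some.inj (e1.symm.trans e2)
      · rcases c with _ | c'
        · exact absurd (h1.2.2.2.2.1 0 (inShape_single.2 ⟨rfl, hc⟩)) hs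
        · have hin : InShape [k] 0 (c' + 1) := inShape_single.2 ⟨rfl, hc⟩
          have hsf : T1.start 0 (c' + 1) = false := by
            rw [Bool.not_eq_true] at hs; exact hs
          rw [h1.2.2.2.2.2 0 c' hin hsf, h2.2.2.2.2.2 0 c' hin (hstart ▸ hsf),
            ih c' (by omega) (by omega)]
  have hentry : T1.entry = T2.entry := by
    funext r c
    by_cases hin : InShape [k] r c
    · obtain ⟨rfl, hck⟩ := inShape_single.1 hin
      exact key c hck
    · rw [(h1.1 r c hin).1, (h2.1 r c hin).1]
  exact VST.ext' hentry hstart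

end Aux3
section Aux4

/-- Partial sums of a composition. -/
def mkS (comp : List ℕ) (j : ℕ) : ℕ := (comp.take j).sum

/-- Cut positions of a composition. -/
def mkCuts (m : ℕ) (comp : List ℕ) : List ℕ := (List.range m).map (mkS comp)

/-- Index count: number of cuts at most `c`. -/
def mkCnt (m : ℕ) (comp : List ℕ) (c : ℕ) : ℕ :=
  ((List.range m).filter (fun j => decide (mkS comp j ≤ c))).length

/-- The valued-set tableau associated to a word and a composition. -/
def mkVST (k m : ℕ) (w comp : List ℕ) : VST where
  entry r c := if r = 0 ∧ c < k then w.getD (mkCnt m comp c - 1) 0 else 0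
  start r c := decide (r = 0 ∧ c < k ∧ c ∈ mkCuts m comp)

lemma mkS_zero (comp : List ℕ) : mkS comp 0 = 0 := rfl

lemma mkS_mono (comp : List ℕ) : Monotone (mkS comp) := by
  intro a b hab
  rw [mkS, mkS, ← List.take_append_drop a (comp.take b), List.sum_append, List.take_take,
    min_eq_left hab]
  omega

lemma mkS_succ {comp : List ℕ} {j : ℕ} (hj : j < comp.length) :
    mkS comp (j + 1) = mkS comp j + comp[j] := by
  rw [mkS, List.take_succ, List.sum_append, List.getElem?_eq_getElem hj]
  simp [mkS]

lemma mkS_strict {comp : List ℕ} (hcp : ∀ x ∈ comp, 0 < x) {j : ℕ}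
    (hj : j < comp.length) : mkS comp j < mkS comp (j + 1) := by
  rw [mkS_succ hj]
  have := hcp _ (List.getElem_mem hj)
  omega

lemma mkS_top {k m : ℕ} {comp : List ℕ} (hcl : comp.length = m) (hcs : comp.sum = k) :
    mkS comp m = k := by
  rw [mkS, List.take_of_length_le (by omega), hcs]

lemma mkS_lt_k {k m : ℕ} {comp : List ℕ} (hcl : comp.length = m)
    (hcp : ∀ x ∈ comp, 0 < x) (hcs : comp.sum = k) {j : ℕ} (hj : j < m) :
    mkS comp j < k := by
  have h1 := mkS_strict hcp (j := j) (by omega)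
  have h2 := mkS_mono comp (show j + 1 ≤ m by omega)
  rw [mkS_top hcl hcs] at h2
  omega

lemma mkS_le_iff {m : ℕ} {comp : List ℕ} (hcp : ∀ x ∈ comp, 0 < x)
    (hcl : comp.length = m) {j j' : ℕ} (hj : j < m) (hj' : j' < m) :
    mkS comp j' ≤ mkS comp j ↔ j' ≤ j := by
  constructor
  · intro hle
    by_contra hgt
    have h1 := mkS_strict hcp (j := j) (by omega)
    have h2 := mkS_mono comp (show j + 1 ≤ j' by omega)
    omega
  · exact fun h => mkS_mono comp h

lemma length_filter_le_range (m j : ℕ) (h : j < m) :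
    ((List.range m).filter (fun x => decide (x ≤ j))).length = j + 1 := by
  induction m with
  | zero => omega
  | succ m ih =>
    rw [List.range_succ, List.filter_append, List.length_append]
    rcases Nat.eq_or_lt_of_le (Nat.lt_succ_iff.1 h) with rfl | hlt
    · rw [List.filter_eq_self.2 (fun a ha => by
        rw [List.mem_range] at ha; simp; omega)]
      simp
    · rw [ih hlt]
      have : ¬ (m ≤ j) := by omega
      simp [this]

lemma mkCnt_mkS {m : ℕ} {comp : List ℕ} (hcp : ∀ x ∈ comp, 0 < x)
    (hcl : comp.length = m) {j : ℕ} (hj : j < m) :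
    mkCnt m comp (mkS comp j) = j + 1 := by
  rw [mkCnt, List.filter_congr (fun j' hj' => ?_), length_filter_le_range m j hj]
  rw [List.mem_range] at hj'
  simp only [decide_eq_decide]
  exact mkS_le_iff hcp hcl hj hj'

lemma mkCnt_pos {m : ℕ} {comp : List ℕ} (hm : 0 < m) (c : ℕ) : 0 < mkCnt m comp c := by
  have h0 : (0 : ℕ) ∈ (List.range m).filter (fun j => decide (mkS comp j ≤ c)) := by
    rw [List.mem_filter, List.mem_range]
    simp [mkS_zero, hm]
  rw [mkCnt]
  exact List.length_pos_iff.2 (List.ne_nil_of_mem h0)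

lemma mkCnt_le {m : ℕ} {comp : List ℕ} (c : ℕ) : mkCnt m comp c ≤ m := by
  rw [mkCnt]
  exact le_trans (List.length_filter_le _ _) (by simp)

lemma mkCnt_mono {m : ℕ} {comp : List ℕ} {c c' : ℕ} (h : c ≤ c') :
    mkCnt m comp c ≤ mkCnt m comp c' := by
  rw [mkCnt, mkCnt, ← List.countP_eq_length_filter, ← List.countP_eq_length_filter]
  exact List.countP_mono_left (fun j _ hp => by simp at hp ⊢; omega)

lemma mkCnt_succ_eq {m : ℕ} {comp : List ℕ} {c : ℕ} (h : (c + 1) ∉ mkCuts m comp) :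
    mkCnt m comp (c + 1) = mkCnt m comp c := by
  rw [mkCnt, mkCnt, List.filter_congr (fun j hj => ?_)]
  rw [List.mem_range] at hj
  have hne : mkS comp j ≠ c + 1 := fun he =>
    h (List.mem_map.2 ⟨j, List.mem_range.2 hj, he⟩)
  simp only [decide_eq_decide]
  omega

lemma mem_mkCuts {m : ℕ} {comp : List ℕ} {c : ℕ} :
    c ∈ mkCuts m comp ↔ ∃ j < m, mkS comp j = c := by
  simp [mkCuts]

lemma mkCuts_sorted {m : ℕ} {comp : List ℕ} (hcp : ∀ x ∈ comp, 0 < x)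
    (hcl : comp.length = m) : (mkCuts m comp).Pairwise (· < ·) := by
  rw [List.pairwise_iff_get]
  intro i j hij
  have hj : (j : ℕ) < m := by have := j.isLt; simpa [mkCuts] using this
  have hi : (i : ℕ) < m := lt_trans hij hj
  simp only [mkCuts, List.get_eq_getElem, List.getElem_map, List.getElem_range]
  show (mkCuts m comp)[(i : ℕ)] < (mkCuts m comp)[(j : ℕ)]
  simp only [mkCuts, List.getElem_map, List.getElem_range]
  have h1 := mkS_strict hcp (j := (i : ℕ)) (by omega)
  have h2 := mkS_mono comp (show (i : ℕ) + 1 ≤ (j : ℕ) by exact_mod_cast hij)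
  omega

lemma sorted_lt_eq_of_mem_iff {l1 l2 : List ℕ} (h1 : l1.Pairwise (· < ·))
    (h2 : l2.Pairwise (· < ·)) (h : ∀ a, a ∈ l1 ↔ a ∈ l2) : l1 = l2 :=
  List.Perm.eq_of_pairwise'
    (h1.imp le_of_lt) (h2.imp le_of_lt)
    ((List.perm_ext_iff_of_nodup h1.nodup h2.nodup).2 h)

lemma buoyCols_mkVST {k m : ℕ} {w comp : List ℕ} (hcp : ∀ x ∈ comp, 0 < x)
    (hcl : comp.length = m) (hcs : comp.sum = k) :
    buoyCols k (mkVST k m w comp) = mkCuts m comp := by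
  apply sorted_lt_eq_of_mem_iff (buoyCols_sorted _ _) (mkCuts_sorted hcp hcl)
  intro c
  rw [mem_buoyCols]
  show (c < k ∧ decide (0 = 0 ∧ c < k ∧ c ∈ mkCuts m comp) = true) ↔ _
  simp only [decide_eq_true_eq, true_and]
  constructor
  · rintro ⟨-, -, hm⟩; exact hm
  · intro hm
    obtain ⟨j, hj, rfl⟩ := mem_mkCuts.1 hm
    exact ⟨mkS_lt_k hcl hcp hcs hj, mkS_lt_k hcl hcp hcs hj, hm⟩

end Aux4
section Aux5

lemma mkVST_isVST {n k m : ℕ} {w comp : List ℕ} (hm : 0 < m)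
    (hws : w.Pairwise (· ≤ ·)) (hwl : w.length = m) (hwb : ∀ x ∈ w, 1 ≤ x ∧ x ≤ n)
    (hcp : ∀ x ∈ comp, 0 < x) (hcl : comp.length = m) (hcs : comp.sum = k) :
    IsVST n [k] (mkVST k m w comp) := by
  have hgetD : ∀ c, c < k → w.getD (mkCnt m comp c - 1) 0
      = w[mkCnt m comp c - 1]'(by
        have := mkCnt_le (m := m) (comp := comp) c; omega) := by
    intro c hc
    exact List.getD_eq_getElem _ _ _
  refine ⟨?_, ?_, ?_, ?_, ?_, ?_⟩
  · intro r c hin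
    rw [inShape_single] at hin
    constructor
    · show (if r = 0 ∧ c < k then _ else 0) = 0
      rw [if_neg hin]
    · show decide _ = false
      simp only [decide_eq_false_iff_not]
      rintro ⟨hr, hc, -⟩
      exact hin ⟨hr, hc⟩
  · intro r c hin
    obtain ⟨rfl, hc⟩ := inShape_single.1 hin
    show 1 ≤ (if _ then _ else 0) ∧ (if _ then _ else 0) ≤ n
    rw [if_pos ⟨rfl, hc⟩, hgetD c hc]
    exact hwb _ (List.getElem_mem _)
  · intro r c hin
    obtain ⟨rfl, hc⟩ := inShape_single.1 hin
    show (if _ then _ else 0) ≤ (if _ then _ else 0)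
    rw [if_pos ⟨rfl, by omega⟩, if_pos ⟨rfl, hc⟩, hgetD c (by omega), hgetD (c+1) hc]
    have h1 := mkCnt_mono (m := m) (comp := comp) (show c ≤ c + 1 by omega)
    have h2 := mkCnt_pos (comp := comp) hm c
    exact hws.rel_get_of_le (by simp; omega)
  · intro r c hin
    rw [inShape_single] at hin
    omega
  · intro r hin
    obtain ⟨rfl, hk⟩ := inShape_single.1 hin
    show decide _ = true
    simp only [decide_eq_true_eq]
    exact ⟨by trivial, hk, mem_mkCuts.2 ⟨0, hm, mkS_zero comp⟩⟩
  · intro r c hin hs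
    obtain ⟨rfl, hc⟩ := inShape_single.1 hin
    have hnm : (c + 1) ∉ mkCuts m comp := by
      intro hmem
      have h2 : (mkVST k m w comp).start 0 (c + 1) = true := by
        show decide _ = true
        simp only [decide_eq_true_eq]
        exact ⟨by trivial, hc, hmem⟩
      rw [hs] at h2
      exact absurd h2 (by simp)
    show (if _ then _ else 0) = (if _ then _ else 0)
    rw [if_pos ⟨rfl, hc⟩, if_pos ⟨rfl, by omega⟩, mkCnt_succ_eq hnm]

lemma mkVST_word {k m : ℕ} {w comp : List ℕ}
    (hwl : w.length = m) (hcp : ∀ x ∈ comp, 0 < x) (hcl : comp.length = m)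
    (hcs : comp.sum = k) :
    vstWord [k] (mkVST k m w comp) = w := by
  rw [vstWord_single, buoyCols_mkVST hcp hcl hcs]
  apply List.ext_getElem (by simp [mkCuts, hwl])
  intro j hj hjw
  have hjm : j < m := by simpa [mkCuts] using hj
  simp only [mkCuts, List.getElem_map, List.getElem_range]
  show (if 0 = 0 ∧ mkS comp j < k then w.getD (mkCnt m comp (mkS comp j) - 1) 0 else 0) = _
  rw [if_pos ⟨rfl, mkS_lt_k hcl hcp hcs hjm⟩, mkCnt_mkS hcp hcl hjm]
  simp only [Nat.add_sub_cancel]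
  exact List.getD_eq_getElem _ _ _

lemma mkVST_groupSizes {k m : ℕ} {w comp : List ℕ} (hcp : ∀ x ∈ comp, 0 < x)
    (hcl : comp.length = m) (hcs : comp.sum = k) :
    groupSizes k (mkVST k m w comp) = comp := by
  have hB := buoyCols_mkVST (w := w) hcp hcl hcs
  have hlen : (buoyCols k (mkVST k m w comp)).length = m := by simp [hB, mkCuts]
  have hget : ∀ j, j < m → (buoyCols k (mkVST k m w comp)).getD j 0 = mkS comp j := by
    intro j hj
    rw [hB, List.getD_eq_getElem _ _ (by simp [mkCuts]; omega)]
    simp [mkCuts]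
  have hget2 : ∀ j, j < m → (buoyCols k (mkVST k m w comp)).getD (j+1) k
      = mkS comp (j+1) := by
    intro j hj
    rcases Nat.eq_or_lt_of_le (Nat.succ_le_of_lt hj) with he | hlt
    · rw [hB, List.getD_eq_default _ _ (by simp [mkCuts]; omega), show j + 1 = m from he,
        mkS_top hcl hcs]
    · rw [hB, List.getD_eq_getElem _ _ (by simp [mkCuts]; omega)]
      simp [mkCuts]
  unfold groupSizes
  rw [hlen]
  apply List.ext_getElem (by simp [hcl])
  intro j hj hjc
  have hjm : j < m := by simpa using hj
  simp only [List.getElem_map, List.getElem_range]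
  rw [hget j hjm, hget2 j hjm, mkS_succ (by omega)]
  omega

end Aux5
section Aux6

/-- Change all entries of the group `[cs, ce]` in row `0` to `i+1`. -/
def setGroup (T : VST) (i cs ce : ℕ) : VST :=
  { T with entry := fun r' c' =>
      if r' = 0 ∧ cs ≤ c' ∧ c' ≤ ce then i + 1 else T.entry r' c' }

lemma anchor_facts {k : ℕ} (T : VST) {cs : ℕ} (hcs : cs < k) :
    cs ≤ anchorCol [k] T 0 cs ∧ anchorCol [k] T 0 cs < k ∧
      ∀ d, cs < d → d ≤ anchorCol [k] T 0 cs → T.start 0 d = false := by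
  set p : ℕ → Bool := fun c' =>
    decide (cs ≤ c' ∧ (¬ InShape [k] 0 (c' + 1) ∨ T.start 0 (c' + 1) = true)) with hp
  have hA : anchorCol [k] T 0 cs = ((List.range k).filter p).headD cs := rfl
  have hmem : (k - 1) ∈ (List.range k).filter p := by
    rw [List.mem_filter, List.mem_range, hp]
    refine ⟨by omega, ?_⟩
    rw [decide_eq_true_eq]
    refine ⟨by omega, Or.inl ?_⟩
    rw [inShape_single]
    omega
  obtain ⟨a, L', hL⟩ := List.exists_cons_of_ne_nil (List.ne_nil_of_mem hmem)
  have hA2 : anchorCol [k] T 0 cs = a := by rw [hA, hL]; rfl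
  have haL : a ∈ (List.range k).filter p := by
    rw [hL]; exact List.mem_cons_self
  have hpa : p a = true := (List.mem_filter.1 haL).2
  have hak : a < k := List.mem_range.1 (List.mem_filter.1 haL).1
  have hcsa : cs ≤ a := by
    rw [hp, decide_eq_true_eq] at hpa; exact hpa.1
  have hmin : ∀ c ∈ (List.range k).filter p, a ≤ c := by
    intro c hc
    rw [hL] at hc
    rcases List.mem_cons.1 hc with rfl | hc
    · exact le_refl _
    · have hpw : ((List.range k).filter p).Pairwise (· < ·) :=
        (List.pairwise_lt_range (n := k)).filter p
      rw [hL] at hpw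
      exact (List.rel_of_pairwise_cons hpw hc).le
  refine ⟨hA2 ▸ hcsa, hA2 ▸ hak, ?_⟩
  intro d hd1 hd2
  rw [hA2] at hd2
  by_contra hds
  rw [Bool.not_eq_false] at hds
  have hc : (d - 1) ∈ (List.range k).filter p := by
    rw [List.mem_filter, List.mem_range, hp, decide_eq_true_eq]
    refine ⟨by omega, by omega, Or.inr ?_⟩
    rw [show d - 1 + 1 = d by omega]
    exact hds
  have := hmin _ hc
  omega

lemma vstF_single {k : ℕ} (i : ℕ) {T T' : VST} (hF : vstF [k] i T = some T') :
    ∃ j, fPos i (vstWord [k] T) = some j ∧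
      groupSizes k T' = groupSizes k T ∧
      vstWord [k] T' = (vstWord [k] T).set j (i + 1) := by
  rw [vstF] at hF
  obtain ⟨j, hj, hT'⟩ := Option.map_eq_some_iff.1 hF
  refine ⟨j, hj, ?_⟩
  have hjmem := List.mem_of_mem_getLast? hj
  rw [List.mem_filter, List.mem_range] at hjmem
  have hjlen : j < (buoyCols k T).length := by
    have := hjmem.1; rwa [vstWord_length_eq] at this
  set cs := (buoyCols k T)[j] with hcsdef
  have hcsk : cs < k := buoyCols_getElem_lt hjlen
  have htag : (vstTagged [k] T).getD j (0, 0, 0) = (T.entry 0 cs, 0, cs) := by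
    rw [vstTagged_single, List.getD_eq_getElem _ _ (by simpa using hjlen),
      List.getElem_map]
  rw [htag] at hT'
  obtain ⟨hce1, hce2, hce3⟩ := anchor_facts T hcsk
  have hT2 : (if InShape [k] (0 + 1) (anchorCol [k] T 0 cs) ∧
        T.entry (0 + 1) (anchorCol [k] T 0 cs) = i + 1 then
        { T with start := fun r' c' =>
            if r' = 0 ∧ c' = cs then false
            else if r' = 0 + 1 ∧ c' = cs then true
            else T.start r' c' }
      else setGroup T i cs (anchorCol [k] T 0 cs)) = T' := hT'
  rw [if_neg (fun hcon => by
    have h1 := hcon.1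
    rw [inShape_single] at h1
    omega)] at hT2
  subst hT2
  refine ⟨rfl, ?_⟩
  have hBT : buoyCols k (setGroup T i cs (anchorCol [k] T 0 cs)) = buoyCols k T := rfl
  rw [vstWord_single, vstWord_single, hBT]
  apply List.ext_getElem (by simp)
  intro j' hj1 hj2
  simp only [List.getElem_map, List.getElem_set, setGroup]
  have hj'len : j' < (buoyCols k T).length := by simpa using hj1
  by_cases hjj : j = j'
  · subst hjj
    have hcc : cs ≤ (buoyCols k T)[j] ∧ (buoyCols k T)[j] ≤ anchorCol [k] T 0 cs := by
      rw [← hcsdef]; exact ⟨le_refl _, hce1⟩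
    rw [if_pos rfl, if_pos ⟨by trivial, hcc.1, hcc.2⟩]
  · rw [if_neg hjj, if_neg ?_]
    rintro ⟨-, hge, hle⟩
    rcases Nat.lt_or_ge j' j with hlt | hge2
    · exact absurd hge (Nat.not_le.2
        (show (buoyCols k T)[j'] < cs from buoyCols_strict hlt hjlen))
    · have hgt : j < j' := by omega
      have hlt2 : cs < (buoyCols k T)[j'] := buoyCols_strict hgt hj'len
      have hf := hce3 _ hlt2 hle
      have hstart := (mem_buoyCols.1 (List.getElem_mem hj'len)).2
      rw [hstart] at hf
      simp at hf

end Aux6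

/-- All compositions of `k` into `m` positive parts. -/
def comps : ℕ → ℕ → Finset (List ℕ)
  | k, 0 => if k = 0 then {[]} else ∅
  | k, m+1 => (Finset.range k).biUnion (fun a => (comps (k - (a+1)) m).image ((a+1) :: ·))

lemma mem_comps : ∀ (m k : ℕ) (l : List ℕ),
    l ∈ comps k m ↔ l.length = m ∧ (∀ x ∈ l, 0 < x) ∧ l.sum = k := by
  intro m
  induction m with
  | zero =>
    intro k l
    simp only [comps]
    split_ifs with h
    · subst h
      simp only [Finset.mem_singleton]
      constructor
      · rintro rfl; simp
      · rintro ⟨hl, -, -⟩; exact List.length_eq_zero_iff.1 hl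
    · simp only [Finset.notMem_empty, false_iff]
      rintro ⟨hl, -, hs⟩
      rw [List.length_eq_zero_iff] at hl
      subst hl; simp at hs; omega
  | succ m ih =>
    intro k l
    simp only [comps, Finset.mem_biUnion, Finset.mem_range, Finset.mem_image]
    constructor
    · rintro ⟨a, ha, t, ht, rfl⟩
      rw [ih] at ht
      obtain ⟨hlen, hpos, hsum⟩ := ht
      refine ⟨by simp [hlen], ?_, by simp [hsum]; omega⟩
      intro x hx
      rcases List.mem_cons.1 hx with rfl | hx
      · omega
      · exact hpos x hx
    · rintro ⟨hlen, hpos, hsum⟩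
      rcases l with _ | ⟨b, t⟩
      · simp at hlen
      · simp only [List.sum_cons] at hsum
        simp only [List.length_cons, Nat.add_right_cancel_iff] at hlen
        have hb : 0 < b := hpos b (by simp)
        refine ⟨b - 1, by omega, t, ?_, by rw [Nat.sub_add_cancel hb]⟩
        rw [ih]
        exact ⟨hlen, fun x hx => hpos x (by simp [hx]), by omega⟩

lemma comps_zero (m : ℕ) (hm : 1 ≤ m) : comps 0 m = ∅ := by
  ext l
  rw [mem_comps]
  simp only [Finset.notMem_empty, iff_false]
  rintro ⟨hlen, hpos, hsum⟩
  rcases l with _ | ⟨b, t⟩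
  · simp at hlen; omega
  · have := hpos b (by simp)
    simp at hsum; omega

lemma sum_range_choose' (N m : ℕ) :
    ∑ j ∈ Finset.range N, j.choose m = N.choose (m + 1) := by
  induction N with
  | zero => simp
  | succ N ih => rw [Finset.sum_range_succ, ih, Nat.choose_succ_succ' N m]; omega

lemma comps_card : ∀ (m k : ℕ), 1 ≤ k → (comps k (m+1)).card = (k-1).choose m := by
  have hdisj : ∀ (k M : ℕ), ∀ a ∈ Finset.range k, ∀ b ∈ Finset.range k, a ≠ b →
      Disjoint ((comps (k - (a+1)) M).image ((a+1) :: ·))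
        ((comps (k - (b+1)) M).image ((b+1) :: ·)) := by
    intro k M a _ b _ hab
    simp only [Finset.disjoint_left, Finset.mem_image]
    rintro l ⟨t, -, rfl⟩ ⟨t', -, h⟩
    injection h with h1 h2
    exact hab (by omega)
  intro m
  induction m with
  | zero =>
    intro k hk
    obtain ⟨k', rfl⟩ : ∃ k', k = k' + 1 := ⟨k - 1, by omega⟩
    rw [show comps (k'+1) 1 = (Finset.range (k'+1)).biUnion
      (fun a => (comps (k'+1 - (a+1)) 0).image ((a+1) :: ·)) from rfl]
    rw [Finset.card_biUnion (hdisj _ _)]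
    have : ∀ a ∈ Finset.range (k'+1),
        ((comps (k'+1 - (a+1)) 0).image ((a+1) :: ·)).card
          = if a = k' then 1 else 0 := by
      intro a ha
      simp only [Finset.mem_range] at ha
      rw [Finset.card_image_of_injective _ (List.cons_injective)]
      by_cases h1 : a = k'
      · have h2 : k' + 1 - (a+1) = 0 := by omega
        rw [h2, if_pos h1]
        show (if (0:ℕ) = 0 then ({[]} : Finset (List ℕ)) else ∅).card = 1
        simp
      · have h2 : k' + 1 - (a+1) ≠ 0 := by omega
        rw [if_neg h1]
        show (if k'+1-(a+1) = 0 then ({[]} : Finset (List ℕ)) else ∅).card = 0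
        rw [if_neg h2]; simp
    rw [Finset.sum_congr rfl this, Finset.sum_ite_eq' (Finset.range (k'+1)) k' (fun _ => 1)]
    simp
  | succ m ih =>
    intro k hk
    obtain ⟨k', rfl⟩ : ∃ k', k = k' + 1 := ⟨k - 1, by omega⟩
    rw [show comps (k'+1) (m+2) = (Finset.range (k'+1)).biUnion
      (fun a => (comps (k'+1 - (a+1)) (m+1)).image ((a+1) :: ·)) from rfl]
    rw [Finset.card_biUnion (hdisj _ _)]
    have hcard : ∀ a ∈ Finset.range (k'+1),
        ((comps (k'+1 - (a+1)) (m+1)).image ((a+1) :: ·)).card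
          = if a + 1 ≤ k' then (k' - 1 - a).choose m else 0 := by
      intro a ha
      simp only [Finset.mem_range] at ha
      rw [Finset.card_image_of_injective _ (List.cons_injective)]
      split_ifs with h1
      · rw [ih (k'+1 - (a+1)) (by omega)]
        congr 1; omega
      · have h2 : k' + 1 - (a+1) = 0 := by omega
        rw [h2, comps_zero _ (by omega)]; simp
    rw [Finset.sum_congr rfl hcard, Finset.sum_range_succ, if_neg (by omega), add_zero]
    have : ∀ a ∈ Finset.range k', (if a + 1 ≤ k' then (k' - 1 - a).choose m else 0)
        = (k' - 1 - a).choose m := by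
      intro a ha
      simp only [Finset.mem_range] at ha
      rw [if_pos (by omega)]
    rw [Finset.sum_congr rfl this, Finset.sum_range_reflect (fun j => j.choose m) k',
      sum_range_choose']
    simp

/-- For the single-row shape `λ = (k)`, the valued-set tableaux with
exactly `m` groups and entries at most `n` are in weight-preserving bijection with pairs
consisting of a weakly increasing word of length `m` in `{1, …, n}` (an element of
`B(mΛ₁)`) and a composition of `k` into `m` positive parts; the bijection is compatible
with the crystal operators (which fix the composition and act on the word), and there are
`C(k−1, m−1)` compositions, hence `C(k−1, m−1)` connected components, each isomorphic to
`B(mΛ₁)`. -/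
theorem vst_single_row_components
    (n k m : ℕ) (hk : 0 < k) (hm : 0 < m) (hmk : m ≤ k) :
    (∃ Φ : VST → List ℕ × List ℕ,
      Set.BijOn Φ
        {T | IsVST n [k] T ∧ (vstWord [k] T).length = m}
        {p : List ℕ × List ℕ | p.1.Pairwise (· ≤ ·) ∧ p.1.length = m ∧
          (∀ x ∈ p.1, 1 ≤ x ∧ x ≤ n) ∧
          p.2.length = m ∧ (∀ x ∈ p.2, 0 < x) ∧ p.2.sum = k} ∧
      (∀ T, IsVST n [k] T → (vstWord [k] T).length = m →
        (Φ T).1 = vstWord [k] T ∧ (Φ T).2 = groupSizes k T) ∧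
      (∀ i, 1 ≤ i → ∀ T, IsVST n [k] T → (vstWord [k] T).length = m →
        ∀ T', vstF [k] i T = some T' →
          (Φ T').2 = (Φ T).2 ∧ fWord i (Φ T).1 = some (Φ T').1)) ∧
    Set.ncard {comp : List ℕ | comp.length = m ∧ (∀ x ∈ comp, 0 < x) ∧ comp.sum = k}
      = Nat.choose (k - 1) (m - 1) := by
  constructor
  · refine ⟨fun T => (vstWord [k] T, groupSizes k T), ⟨?_, ?_, ?_⟩,
      fun T _ _ => ⟨rfl, rfl⟩, ?_⟩
    · -- MapsTo
      rintro T ⟨hvst, hlen⟩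
      have hglen : (groupSizes k T).length = m := by
        rw [groupSizes_length, ← vstWord_length_eq, hlen]
      exact ⟨vstWord_sorted hvst, hlen, vstWord_bounds hvst, hglen,
        groupSizes_pos, groupSizes_sum hvst hk⟩
    · -- InjOn
      rintro T1 ⟨h1, -⟩ T2 ⟨h2, -⟩ heq
      simp only [Prod.mk.injEq] at heq
      exact vst_inj hk h1 h2 heq.1 heq.2
    · -- SurjOn
      rintro ⟨w, comp⟩ ⟨hsort, hwl, hbnd, hclen, hcpos, hcsum⟩
      refine ⟨mkVST k m w comp, ⟨?_, ?_⟩, ?_⟩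
      · exact mkVST_isVST hm hsort hwl hbnd hcpos hclen hcsum
      · rw [mkVST_word hwl hcpos hclen hcsum, hwl]
      · show (vstWord [k] (mkVST k m w comp), groupSizes k (mkVST k m w comp)) = (w, comp)
        rw [mkVST_word hwl hcpos hclen hcsum, mkVST_groupSizes hcpos hclen hcsum]
    · -- crystal operator compatibility
      intro i _ T _ _ T' hF
      obtain ⟨j, hjpos, hgs, hword⟩ := vstF_single i hF
      refine ⟨hgs, ?_⟩
      show fWord i (vstWord [k] T) = some (vstWord [k] T')
      rw [fWord, hjpos, Option.map_some, hword]
  · -- counting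
    have hset : {comp : List ℕ | comp.length = m ∧ (∀ x ∈ comp, 0 < x) ∧ comp.sum = k}
        = ↑(comps k m) := by
      ext l; simp [mem_comps]
    rw [hset, Set.ncard_coe_finset]
    obtain ⟨m', rfl⟩ : ∃ m', m = m' + 1 := ⟨m - 1, by omega⟩
    rw [comps_card m' k (by omega)]
    simp
end
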